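/- arXiv:1004.5254 — 11 statements merged into one kernel-verified Lean document; each statement's English description precedes it below -/
import Mathlib

section
/- Let p be a positive integer and f : (0, ε₀] → ℂ a function. The following are equivalent: (i) there exist constants C, L > 0 such that |f(ε)| ≤ C·L^N·Γ(N/p + 1)·ε^N for every natural number N and every ε ∈ (0, ε₀]; (ii) there exist constants C', A > 0 such that |f(ε)| ≤ C'·exp(-A/ε^p) for every ε ∈ (0, ε₀]. Moreover, in the direction (i) ⇒ (ii) one may take any A < L^{-p}, and in (ii) ⇒ (i) any L > A^{-1/p}. -/
open MeasureTheory Set Nat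

lemma rpow_mul_exp_neg_le_Gamma {s x : ℝ} (hs : 0 ≤ s) (hx : 0 < x) :
    x ^ s * Real.exp (-x) ≤ Real.Gamma (s + 1) := by
  rw [Real.Gamma_eq_integral (by linarith : (0:ℝ) < s + 1)]
  have hint : IntegrableOn (fun t => Real.exp (-t) * t ^ (s + 1 - 1)) (Ioi 0) :=
    Real.GammaIntegral_convergent (by linarith)
  have hsub : IntegrableOn (fun t => Real.exp (-t) * t ^ (s + 1 - 1)) (Ioi x) :=
    hint.mono_set (Ioi_subset_Ioi hx.le)
  have h1 : (∫ t in Ioi x, Real.exp (-t) * t ^ (s + 1 - 1)) ≤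
      ∫ t in Ioi 0, Real.exp (-t) * t ^ (s + 1 - 1) := by
    apply setIntegral_mono_set hint
    · filter_upwards [ae_restrict_mem measurableSet_Ioi] with t ht
      exact mul_nonneg (Real.exp_pos _).le (Real.rpow_nonneg (le_of_lt ht) _)
    · exact (Ioi_subset_Ioi hx.le).eventuallyLE
  have h2 : x ^ s * Real.exp (-x) ≤ ∫ t in Ioi x, Real.exp (-t) * t ^ (s + 1 - 1) := by
    have hconst : IntegrableOn (fun t => Real.exp (-t) * x ^ s) (Ioi x) := by
      have h := (exp_neg_integrableOn_Ioi x one_pos).mul_const (x ^ s)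
      simpa [IntegrableOn] using h
    have heq : (∫ t in Ioi x, Real.exp (-t) * x ^ s) = x ^ s * Real.exp (-x) := by
      rw [integral_mul_const, integral_exp_neg_Ioi, mul_comm]
    rw [← heq]
    apply setIntegral_mono_on hconst hsub measurableSet_Ioi
    intro t ht
    have ht2 : x ^ s ≤ t ^ (s + 1 - 1) := by
      rw [add_sub_cancel_right]
      exact Real.rpow_le_rpow hx.le (le_of_lt ht) hs
    exact mul_le_mul_of_nonneg_left ht2 (Real.exp_pos _).le
  linarith

lemma exp_small_to_gevrey (p : ℕ) (hp : 0 < p) (ε₀ : ℝ) (f : ℝ → ℂ)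
    {C' A : ℝ} (hC' : 0 < C') (hA : 0 < A)
    (hf : ∀ ε ∈ Set.Ioc (0:ℝ) ε₀, ‖f ε‖ ≤ C' * Real.exp (-A / ε ^ p))
    (L : ℝ) (hL : A ^ (-(1:ℝ)/p) < L) :
    ∃ C : ℝ, 0 < C ∧ ∀ N : ℕ, ∀ ε ∈ Set.Ioc (0:ℝ) ε₀,
      ‖f ε‖ ≤ C * L ^ N * Real.Gamma ((N:ℝ)/p + 1) * ε ^ N := by
  have hp' : (p:ℝ) ≠ 0 := Nat.cast_ne_zero.mpr hp.ne'
  set B : ℝ := A ^ (-(1:ℝ)/p) with hBdef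
  have hB : 0 < B := Real.rpow_pos_of_pos hA _
  refine ⟨C', hC', fun N ε hε => ?_⟩
  have hε0 : 0 < ε := hε.1
  set x : ℝ := A / ε ^ p with hxdef
  have hx : 0 < x := div_pos hA (pow_pos hε0 p)
  set s : ℝ := (N:ℝ)/p with hsdef
  have hs : 0 ≤ s := by positivity
  have key := rpow_mul_exp_neg_le_Gamma hs hx
  have hΓ : 0 < Real.Gamma (s + 1) := Real.Gamma_pos_of_pos (by linarith)
  have hxs : 0 < x ^ s := Real.rpow_pos_of_pos hx s
  have h1 : Real.exp (-x) ≤ Real.Gamma (s+1) * (x ^ s)⁻¹ := by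
    rw [← div_eq_mul_inv, le_div_iff₀ hxs]
    linarith [key]
  -- (x ^ s)⁻¹ = ε ^ N * B ^ N
  have h2 : (x ^ s)⁻¹ = ε ^ N * B ^ N := by
    rw [hxdef, Real.div_rpow hA.le (pow_pos hε0 p).le, hBdef]
    rw [← Real.rpow_natCast ε p, ← Real.rpow_mul hε0.le, ← Real.rpow_natCast (A ^ (-(1:ℝ)/p)) N,
      ← Real.rpow_natCast ε N, ← Real.rpow_mul hA.le]
    rw [inv_div, div_eq_mul_inv, ← Real.rpow_neg hA.le]
    congr 1
    · rw [hsdef]; field_simp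
    · rw [hsdef]; field_simp
  have hBL : B ^ N ≤ L ^ N := pow_le_pow_left₀ hB.le hL.le N
  calc ‖f ε‖ ≤ C' * Real.exp (-A / ε ^ p) := hf ε hε
    _ = C' * Real.exp (-x) := by rw [hxdef, neg_div]
    _ ≤ C' * (Real.Gamma (s+1) * (ε ^ N * B ^ N)) := by
        rw [← h2]; exact mul_le_mul_of_nonneg_left h1 hC'.le
    _ ≤ C' * (Real.Gamma (s+1) * (ε ^ N * L ^ N)) := by
        have : 0 ≤ ε ^ N := (pow_pos hε0 N).le
        gcongr
    _ = C' * L ^ N * Real.Gamma ((N:ℝ)/p + 1) * ε ^ N := by rw [hsdef]; ring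

lemma gevrey_to_exp_small (p : ℕ) (hp : 0 < p) (ε₀ : ℝ) (f : ℝ → ℂ)
    {C L : ℝ} (hC : 0 < C) (hL : 0 < L)
    (hf : ∀ N : ℕ, ∀ ε ∈ Set.Ioc (0:ℝ) ε₀,
      ‖f ε‖ ≤ C * L ^ N * Real.Gamma ((N:ℝ)/p + 1) * ε ^ N)
    (A : ℝ) (hA0 : 0 < A) (hA : A < L ^ (-(p:ℝ))) :
    ∃ C' : ℝ, 0 < C' ∧ ∀ ε ∈ Set.Ioc (0:ℝ) ε₀,
      ‖f ε‖ ≤ C' * Real.exp (-A / ε ^ p) := by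
  have hp' : (p:ℝ) ≠ 0 := Nat.cast_ne_zero.mpr hp.ne'
  have hLp : (0:ℝ) < L ^ p := pow_pos hL p
  set θ : ℝ := A * L ^ p with hθdef
  have hθ0 : 0 < θ := mul_pos hA0 hLp
  have hθ1 : θ < 1 := by
    have hrw : L ^ (-(p:ℝ)) = (L ^ p)⁻¹ := by
      rw [Real.rpow_neg hL.le, Real.rpow_natCast]
    rw [hrw] at hA
    calc θ = A * L ^ p := hθdef
      _ < (L ^ p)⁻¹ * L ^ p := by gcongr
      _ = 1 := inv_mul_cancel₀ hLp.ne'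
  have h1θ : 0 < 1 - θ := by linarith
  refine ⟨C * (1 - θ)⁻¹, by positivity, fun ε hε => ?_⟩
  have hε0 : 0 < ε := hε.1
  set x : ℝ := A / ε ^ p with hxdef
  have hx : 0 < x := div_pos hA0 (pow_pos hε0 p)
  have hεp : (ε:ℝ) ^ p ≠ 0 := (pow_pos hε0 p).ne'
  have hterm : ∀ n : ℕ, ‖f ε‖ * (x ^ n / n !) ≤ C * θ ^ n := by
    intro n
    have hb := hf (p * n) ε hε
    have hΓ : Real.Gamma (((p*n : ℕ):ℝ)/p + 1) = (n ! : ℝ) := by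
      have h : ((p*n : ℕ):ℝ)/p = (n:ℝ) := by push_cast; field_simp
      rw [h]
      exact_mod_cast Real.Gamma_nat_eq_factorial n
    rw [hΓ] at hb
    have hfac : (0:ℝ) < n ! := by positivity
    have hxn : (0:ℝ) ≤ x ^ n / n ! := by positivity
    have hkey : L ^ (p*n) * ε ^ (p*n) * x ^ n = θ ^ n := by
      rw [pow_mul, pow_mul, ← mul_pow, ← mul_pow, hθdef, hxdef]
      congr 1
      field_simp
    calc ‖f ε‖ * (x ^ n / n !) ≤ (C * L ^ (p*n) * (n !) * ε ^ (p*n)) * (x ^ n / n !) :=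
          mul_le_mul_of_nonneg_right hb hxn
      _ = C * (L ^ (p*n) * ε ^ (p*n) * x ^ n) := by field_simp
      _ = C * θ ^ n := by rw [hkey]
  have hsum1 : Summable (fun n : ℕ => ‖f ε‖ * (x ^ n / n !)) :=
    (Real.summable_pow_div_factorial x).mul_left _
  have hsum2 : Summable (fun n : ℕ => C * θ ^ n) :=
    (summable_geometric_of_lt_one hθ0.le hθ1).mul_left C
  have hts := Summable.tsum_le_tsum hterm hsum1 hsum2
  have hL1 : (∑' n : ℕ, ‖f ε‖ * (x ^ n / n !)) = ‖f ε‖ * Real.exp x := by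
    rw [tsum_mul_left]
    congr 1
    rw [Real.exp_eq_exp_ℝ, NormedSpace.exp_eq_tsum_div]
  have hR1 : (∑' n : ℕ, C * θ ^ n) = C * (1 - θ)⁻¹ := by
    rw [tsum_mul_left, tsum_geometric_of_lt_one hθ0.le hθ1]
  rw [hL1, hR1] at hts
  have : ‖f ε‖ ≤ C * (1 - θ)⁻¹ * Real.exp (-x) := by
    rw [Real.exp_neg, ← div_eq_mul_inv, le_div_iff₀ (Real.exp_pos x)]
    exact hts
  calc ‖f ε‖ ≤ C * (1 - θ)⁻¹ * Real.exp (-x) := this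
    _ = C * (1 - θ)⁻¹ * Real.exp (-A / ε ^ p) := by rw [hxdef, neg_div]

/-- Equivalence between Gevrey-flatness of order `1/p` and exponential smallness
of order `p`, with the announced relations between the constants: from Gevrey
type `L` one gets any exponential rate `A < L^{-p}`, and from exponential rate
`A` one gets any Gevrey type `L > A^{-1/p}`. -/
theorem gevrey_flat_iff_exp_small (p : ℕ) (hp : 0 < p) (ε₀ : ℝ) (hε₀ : 0 < ε₀) (f : ℝ → ℂ) :
    ((∃ C L : ℝ, 0 < C ∧ 0 < L ∧ ∀ N : ℕ, ∀ ε ∈ Set.Ioc (0 : ℝ) ε₀,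
        ‖f ε‖ ≤ C * L ^ N * Real.Gamma ((N : ℝ) / p + 1) * ε ^ N) ↔
      (∃ C' A : ℝ, 0 < C' ∧ 0 < A ∧ ∀ ε ∈ Set.Ioc (0 : ℝ) ε₀,
        ‖f ε‖ ≤ C' * Real.exp (-A / ε ^ p))) ∧
    (∀ C L : ℝ, 0 < C → 0 < L →
      (∀ N : ℕ, ∀ ε ∈ Set.Ioc (0 : ℝ) ε₀,
        ‖f ε‖ ≤ C * L ^ N * Real.Gamma ((N : ℝ) / p + 1) * ε ^ N) →
      ∀ A : ℝ, 0 < A → A < L ^ (-(p : ℝ)) →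
        ∃ C' : ℝ, 0 < C' ∧ ∀ ε ∈ Set.Ioc (0 : ℝ) ε₀,
          ‖f ε‖ ≤ C' * Real.exp (-A / ε ^ p)) ∧
    (∀ C' A : ℝ, 0 < C' → 0 < A →
      (∀ ε ∈ Set.Ioc (0 : ℝ) ε₀, ‖f ε‖ ≤ C' * Real.exp (-A / ε ^ p)) →
      ∀ L : ℝ, A ^ (-(1 : ℝ) / p) < L →
        ∃ C : ℝ, 0 < C ∧ ∀ N : ℕ, ∀ ε ∈ Set.Ioc (0 : ℝ) ε₀,
          ‖f ε‖ ≤ C * L ^ N * Real.Gamma ((N : ℝ) / p + 1) * ε ^ N) := by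
  refine ⟨?_, ?_, ?_⟩
  · constructor
    · rintro ⟨C, L, hC, hL, h⟩
      have hA0 : 0 < L ^ (-(p : ℝ)) / 2 := by
        have := Real.rpow_pos_of_pos hL (-(p:ℝ)); linarith
      have hA : L ^ (-(p : ℝ)) / 2 < L ^ (-(p : ℝ)) := by
        have := Real.rpow_pos_of_pos hL (-(p:ℝ)); linarith
      obtain ⟨C', hC', h'⟩ := gevrey_to_exp_small p hp ε₀ f hC hL h _ hA0 hA
      exact ⟨C', _, hC', hA0, h'⟩
    · rintro ⟨C', A, hC', hA, h⟩
      have hB : 0 < A ^ (-(1:ℝ)/p) := Real.rpow_pos_of_pos hA _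
      have hL : A ^ (-(1:ℝ)/p) < A ^ (-(1:ℝ)/p) + 1 := by linarith
      obtain ⟨C, hC, h'⟩ := exp_small_to_gevrey p hp ε₀ f hC' hA h _ hL
      exact ⟨C, _, hC, by linarith, h'⟩
  · intro C L hC hL h A hA0 hA
    exact gevrey_to_exp_small p hp ε₀ f hC hL h A hA0 hA
  · intro C' A hC' hA h L hL
    exact exp_small_to_gevrey p hp ε₀ f hC' hA h L hL
end

section
/- Let p be a positive integer and g : [1, ∞) → ℂ. Suppose there exist constants C, L > 0 such that |g(X)| ≤ C·L^M·Γ(M/p + 1)·X^{-M} for every natural number M and every X ≥ 1. Then for every B with 0 < B < L^{-p} there exists a constant C' such that |g(X)| ≤ C'·exp(-B·X^p) for all X ≥ 1. -/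
open scoped Nat

lemma factorial_le_exp_pow : ∀ k : ℕ, 1 ≤ k →
    (k ! : ℝ) ≤ Real.exp (1 - k) * (k : ℝ) ^ (k + 1) := by
  refine Nat.le_induction ?_ ?_
  · norm_num [Nat.factorial]
  · intro n hn ih
    have hn0 : (0:ℝ) < n := by exact_mod_cast hn
    have hxpos : (0:ℝ) < (n:ℝ) + 1 := by linarith
    -- key : exp 1 * n^(n+1) ≤ (n+1)^(n+1)
    have h1 : Real.exp (1/((n:ℝ)+1)) ≤ ((n:ℝ)+1)/n := by
      have h2 := Real.add_one_le_exp (-(1/((n:ℝ)+1)))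
      have h3 : (n:ℝ)/((n:ℝ)+1) ≤ Real.exp (-(1/((n:ℝ)+1))) := by
        have : -(1/((n:ℝ)+1)) + 1 = (n:ℝ)/((n:ℝ)+1) := by field_simp; ring
        linarith [h2, this.ge.trans h2]
      have h4 : (Real.exp (-(1/((n:ℝ)+1))))⁻¹ ≤ ((n:ℝ)/((n:ℝ)+1))⁻¹ := by
        apply inv_anti₀ (by positivity) h3
      rw [← Real.exp_neg] at h4
      simpa [inv_div] using h4
    have key : Real.exp 1 * (n:ℝ)^(n+1) ≤ ((n:ℝ)+1)^(n+1) := by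
      have e1 : Real.exp 1 = (Real.exp (1/((n:ℝ)+1)))^(n+1) := by
        rw [← Real.exp_nat_mul]
        congr 1
        push_cast
        rw [mul_one_div, div_self hxpos.ne']
      calc Real.exp 1 * (n:ℝ)^(n+1)
          = (Real.exp (1/((n:ℝ)+1)))^(n+1) * (n:ℝ)^(n+1) := by rw [e1]
        _ ≤ (((n:ℝ)+1)/n)^(n+1) * (n:ℝ)^(n+1) := by
            gcongr
        _ = ((n:ℝ)+1)^(n+1) := by
            rw [div_pow, div_mul_cancel₀]
            positivity
    calc ((n+1)! : ℝ) = ((n:ℝ)+1) * (n ! : ℝ) := by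
          rw [Nat.factorial_succ]; push_cast; ring
      _ ≤ ((n:ℝ)+1) * (Real.exp (1-n) * (n:ℝ)^(n+1)) := by gcongr
      _ = ((n:ℝ)+1) * Real.exp (-(n:ℝ)) * (Real.exp 1 * (n:ℝ)^(n+1)) := by
          rw [show (1-(n:ℝ)) = -(n:ℝ) + 1 by ring, Real.exp_add]; ring
      _ ≤ ((n:ℝ)+1) * Real.exp (-(n:ℝ)) * ((n:ℝ)+1)^(n+1) := by
          gcongr
      _ = Real.exp (1 - (↑(n+1):ℝ)) * (↑(n+1):ℝ)^(n+1+1) := by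
          push_cast
          rw [show (1 - ((n:ℝ)+1)) = -(n:ℝ) by ring]
          ring

/-- A function on `[1, ∞)` whose asymptotic expansion at infinity vanishes
with compatible Gevrey estimates of order `1/p` and type `L` decays like
`exp(-B·X^p)` for every `0 < B < L^{-p}`. -/
theorem gevrey_flat_at_infinity_exp_decay (p : ℕ) (hp : 0 < p) (g : ℝ → ℂ)
    (C L : ℝ) (hC : 0 < C) (hL : 0 < L)
    (h : ∀ M : ℕ, ∀ X : ℝ, 1 ≤ X →
      ‖g X‖ ≤ C * L ^ M * Real.Gamma ((M : ℝ) / p + 1) * X ^ (-(M : ℝ)))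
    (B : ℝ) (hB0 : 0 < B) (hB : B < L ^ (-(p : ℝ))) :
    ∃ C' : ℝ, 0 < C' ∧ ∀ X : ℝ, 1 ≤ X → ‖g X‖ ≤ C' * Real.exp (-B * X ^ p) := by
  set θ := B * L ^ p with hθdef
  have hLp : (0:ℝ) < L ^ p := by positivity
  have hθ1 : θ < 1 := by
    have hrw : L ^ (-(p:ℝ)) = (L ^ p)⁻¹ := by
      rw [Real.rpow_neg hL.le, Real.rpow_natCast]
    rw [hrw] at hB
    calc θ = B * L ^ p := rfl
      _ < (L^p)⁻¹ * L^p := by gcongr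
      _ = 1 := inv_mul_cancel₀ hLp.ne'
  have hθ0 : 0 < θ := by positivity
  have hδ : (0:ℝ) < 1 - θ := by linarith
  refine ⟨C * Real.exp 2 / (1 - θ) + C * Real.exp θ, by
    have h6 : 0 < C * Real.exp 2 / (1-θ) := div_pos (by positivity) hδ
    have h7 : 0 < C * Real.exp θ := by positivity
    linarith, ?_⟩
  intro X hX
  have hX0 : (0:ℝ) < X := lt_of_lt_of_le one_pos hX
  set t := X ^ p / L ^ p with htdef
  have ht0 : 0 < t := by positivity
  have hBt : B * X ^ p = θ * t := by
    rw [hθdef, htdef]; field_simp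
  rcases lt_or_ge t 1 with hts | htl
  · -- small case : use M = 0
    have h0 := h 0 X hX
    simp only [pow_zero, Nat.cast_zero, zero_div, zero_add, Real.Gamma_one, neg_zero,
      Real.rpow_zero, mul_one, one_mul] at h0
    have hXp : X ^ p ≤ L ^ p := by
      rw [htdef, div_lt_one hLp] at hts
      exact hts.le
    have h1 : C * Real.exp θ ≤ C * Real.exp 2 / (1 - θ) + C * Real.exp θ := by
      have : 0 ≤ C * Real.exp 2 / (1 - θ) := (div_pos (by positivity) hδ).le
      linarith
    have h2 : Real.exp (-θ) ≤ Real.exp (-B * X^p) := by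
      apply Real.exp_le_exp.mpr
      have : B * X ^ p ≤ B * L ^ p := by gcongr
      rw [hθdef]; linarith
    calc ‖g X‖ ≤ C := h0
      _ = C * Real.exp θ * Real.exp (-θ) := by
          rw [mul_assoc, ← Real.exp_add]; simp
      _ ≤ (C * Real.exp 2 / (1 - θ) + C * Real.exp θ) * Real.exp (-B * X^p) :=
          mul_le_mul h1 h2 (Real.exp_pos _).le (by
            have h6 : 0 < C * Real.exp 2 / (1-θ) := div_pos (by positivity) hδ
            have h7 : 0 < C * Real.exp θ := by positivity
            linarith)
  · -- large case
    set k := ⌊t⌋₊ with hkdef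
    have hk1 : 1 ≤ k := Nat.le_floor (by exact_mod_cast htl)
    have hkt : (k:ℝ) ≤ t := Nat.floor_le ht0.le
    have hlt : t < k + 1 := Nat.lt_floor_add_one t
    have hk0 : (0:ℝ) < k := by
      have : (1:ℝ) ≤ (k:ℝ) := by exact_mod_cast hk1
      linarith
    have h' := h (p*k) X hX
    have hGamma : Real.Gamma ((↑(p*k):ℝ)/p + 1) = (k ! : ℝ) := by
      have hcast : ((p*k : ℕ):ℝ)/p = (k:ℝ) := by
        push_cast
        field_simp
      rw [hcast, Real.Gamma_nat_eq_factorial]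
    have hXr : X ^ (-(↑(p*k):ℝ)) = ((X ^ p) ^ k)⁻¹ := by
      rw [Real.rpow_neg hX0.le, Real.rpow_natCast, pow_mul]
    rw [hGamma, hXr, pow_mul] at h'
    have hprod : (L^p)^k * ((X^p)^k)⁻¹ = (t⁻¹)^k := by
      rw [← div_eq_mul_inv, ← div_pow, htdef, inv_div]
    have h'' : ‖g X‖ ≤ C * (k ! : ℝ) * (t⁻¹)^k := by
      calc ‖g X‖ ≤ C * (L^p)^k * (k ! : ℝ) * ((X^p)^k)⁻¹ := h'
        _ = C * (k ! : ℝ) * ((L^p)^k * ((X^p)^k)⁻¹) := by ring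
        _ = C * (k ! : ℝ) * (t⁻¹)^k := by rw [hprod]
    have hfac := factorial_le_exp_pow k hk1
    have h3 : (k:ℝ)^(k+1) * (t⁻¹)^k ≤ t := by
      have heq : (k:ℝ)^(k+1) * (t⁻¹)^k = (k:ℝ) * ((k:ℝ)/t)^k := by
        rw [pow_succ', mul_assoc, ← mul_pow, div_eq_mul_inv]
      rw [heq]
      have hdiv : (k:ℝ)/t ≤ 1 := (div_le_one ht0).mpr hkt
      calc (k:ℝ) * ((k:ℝ)/t)^k ≤ (k:ℝ) * 1 := by
            gcongr
            exact pow_le_one₀ (by positivity) hdiv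
        _ = (k:ℝ) := mul_one _
        _ ≤ t := hkt
    have h4 : Real.exp (1 - (k:ℝ)) ≤ Real.exp (2 - t) := by
      apply Real.exp_le_exp.mpr
      linarith
    have h5 : t ≤ Real.exp ((1-θ)*t) / (1-θ) := by
      rw [le_div_iff₀ (by linarith)]
      have := Real.add_one_le_exp ((1-θ)*t)
      nlinarith
    have hexp : Real.exp (2-t) * (Real.exp ((1-θ)*t)) = Real.exp 2 * Real.exp (-(θ*t)) := by
      rw [← Real.exp_add, ← Real.exp_add]
      congr 1
      ring
    calc ‖g X‖ ≤ C * (k ! : ℝ) * (t⁻¹)^k := h''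
      _ ≤ C * (Real.exp (1 - (k:ℝ)) * (k:ℝ)^(k+1)) * (t⁻¹)^k := by
          gcongr
      _ = C * Real.exp (1 - (k:ℝ)) * ((k:ℝ)^(k+1) * (t⁻¹)^k) := by ring
      _ ≤ C * Real.exp (2 - t) * t := by gcongr
      _ ≤ C * Real.exp (2 - t) * (Real.exp ((1-θ)*t) / (1-θ)) := by gcongr
      _ = C * (Real.exp (2-t) * Real.exp ((1-θ)*t)) / (1-θ) := by ring
      _ = C * (Real.exp 2 * Real.exp (-(θ*t))) / (1-θ) := by rw [hexp]
      _ = C * Real.exp 2 / (1-θ) * Real.exp (-(θ*t)) := by ring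
      _ ≤ (C * Real.exp 2 / (1 - θ) + C * Real.exp θ) * Real.exp (-B * X^p) := by
          rw [show -B * X^p = -(θ*t) by rw [← hBt]; ring]
          have h7 : 0 ≤ C * Real.exp θ := by positivity
          gcongr
          linarith
end

section
/- Define U⁻(X) = e^{X²} ∫_{-∞}^X e^{-T²} dT. Then for every X < 0, |U⁻(X) + 1/(2X)| ≤ 1/(4|X|³). -/
open MeasureTheory Set Filter Real Topology

/-- The special function `U⁻(X) = e^{X²} ∫_{-∞}^X e^{-T²} dT`. -/
noncomputable def Uminus (X : ℝ) : ℝ :=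
  Real.exp (X ^ 2) * ∫ T in Set.Iio X, Real.exp (-T ^ 2)

lemma integrable_g : MeasureTheory.Integrable (fun T : ℝ => Real.exp (-T ^ 2)) := by
  simpa using integrable_exp_neg_mul_sq (b := 1) one_pos

set_option maxHeartbeats 1000000 in
/-- First step of the asymptotic expansion of `U⁻` at `-∞`:
for `X < 0`, `|U⁻(X) + 1/(2X)| ≤ 1/(4|X|³)`. -/
theorem Uminus_asymptotic (X : ℝ) (hX : X < 0) :
    |Uminus X + 1 / (2 * X)| ≤ 1 / (4 * |X| ^ 3) := by
  have hX0 : X ≠ 0 := ne_of_lt hX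
  have hX2 : (0:ℝ) < X ^ 2 := by positivity
  -- derivative computation
  have hderiv : ∀ x ∈ Iic X, HasDerivAt (fun T : ℝ => -Real.exp (-T ^ 2) / (2 * T))
      (Real.exp (-x ^ 2) + Real.exp (-x ^ 2) / (2 * x ^ 2)) x := by
    intro x hx
    have hx0 : x ≠ 0 := by have := lt_of_le_of_lt hx.out hX; linarith
    have h1 : HasDerivAt (fun T : ℝ => -Real.exp (-T ^ 2)) (2 * x * Real.exp (-x ^ 2)) x := by
      have : HasDerivAt (fun T : ℝ => -T ^ 2) (-(2 * x)) x := by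
        simpa using ((hasDerivAt_pow 2 x).fun_neg)
      have := (Real.hasDerivAt_exp (-x ^ 2)).comp x this
      simpa [mul_comm, Function.comp_def] using this.fun_neg
    have h2 : HasDerivAt (fun T : ℝ => 2 * T) 2 x := by
      simpa using (hasDerivAt_id x).const_mul 2
    have := h1.fun_div h2 (by simpa using hx0)
    refine this.congr_deriv ?_
    field_simp
    ring
  have hmono : ∀ x ∈ Iic X, Real.exp (-x ^ 2) / (2 * x ^ 2) ≤ Real.exp (-x ^ 2) / (2 * X ^ 2) := by
    intro x hx
    have hxX : x ≤ X := hx.out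
    have hsq : X ^ 2 ≤ x ^ 2 := by nlinarith
    apply div_le_div_of_nonneg_left (Real.exp_pos _).le (by positivity)
    linarith
  -- integrability of the remainder term on Iic X
  have hRmeas : AEStronglyMeasurable (fun T : ℝ => Real.exp (-T ^ 2) / (2 * T ^ 2))
      (volume.restrict (Iic X)) := by
    apply ContinuousOn.aestronglyMeasurable _ measurableSet_Iic
    apply ContinuousOn.div (Real.continuous_exp.comp (by fun_prop)).continuousOn (by fun_prop)
    intro x hx
    have hx0 : x ≠ 0 := by have := lt_of_le_of_lt hx.out hX; linarith
    positivity
  have hRint : IntegrableOn (fun T : ℝ => Real.exp (-T ^ 2) / (2 * T ^ 2)) (Iic X) := by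
    apply Integrable.mono' ((integrable_g.div_const (2 * X ^ 2)).integrableOn) hRmeas
    filter_upwards [ae_restrict_mem measurableSet_Iic] with x hx
    have := hmono x hx
    rw [Real.norm_eq_abs, abs_of_nonneg (by positivity)]
    exact this
  have hint : IntegrableOn
      (fun x : ℝ => Real.exp (-x ^ 2) + Real.exp (-x ^ 2) / (2 * x ^ 2)) (Iic X) :=
    integrable_g.integrableOn.add hRint
  -- limit at -∞
  have hlim : Tendsto (fun T : ℝ => -Real.exp (-T ^ 2) / (2 * T)) atBot (𝓝 0) := by
    have h1 : Tendsto (fun T : ℝ => -Real.exp (-T ^ 2)) atBot (𝓝 0) := by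
      have hsq : Tendsto (fun T : ℝ => -T ^ 2) atBot atBot := by
        apply tendsto_atBot_mono' atBot _ tendsto_id
        filter_upwards [eventually_le_atBot (-1:ℝ)] with T hT
        simp only [id]
        nlinarith
      simpa using (Real.tendsto_exp_atBot.comp hsq).neg
    have h2 : Tendsto (fun T : ℝ => (2 * T)⁻¹) atBot (𝓝 0) := by
      have ht : Tendsto (fun T : ℝ => -(2 * T)) atBot atTop := by
        apply tendsto_atTop_mono' atBot _ tendsto_neg_atBot_atTop
        filter_upwards [eventually_le_atBot (0:ℝ)] with T hT
        linarith
      have := (tendsto_inv_atTop_zero.comp ht).neg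
      simpa [Function.comp, inv_neg] using this
    simpa [div_eq_mul_inv] using h1.mul h2
  -- FTC on (-∞, X]
  have hFTC := integral_Iic_of_hasDerivAt_of_tendsto' hderiv hint hlim
  rw [sub_zero] at hFTC
  set I : ℝ := ∫ T in Iio X, Real.exp (-T ^ 2) with hI
  set R : ℝ := ∫ T in Iio X, Real.exp (-T ^ 2) / (2 * T ^ 2) with hR
  have hsplit : I + R = -Real.exp (-X ^ 2) / (2 * X) := by
    rw [hI, hR, ← integral_Iic_eq_integral_Iio, ← integral_Iic_eq_integral_Iio,
      ← integral_add integrable_g.integrableOn hRint]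
    exact hFTC
  have hRnonneg : 0 ≤ R := by
    apply setIntegral_nonneg measurableSet_Iio
    intro x hx
    have hx0 : x ≠ 0 := by have := lt_trans hx.out hX; linarith
    positivity
  have hRle : R ≤ I / (2 * X ^ 2) := by
    rw [hI, hR, ← integral_Iic_eq_integral_Iio, ← integral_Iic_eq_integral_Iio,
      ← MeasureTheory.integral_div]
    exact setIntegral_mono_on hRint (integrable_g.div_const _).integrableOn
      measurableSet_Iic hmono
  have hexp : Real.exp (X ^ 2) * Real.exp (-X ^ 2) = 1 := by
    rw [← Real.exp_add]; simp
  have hU : Uminus X = -1 / (2 * X) - Real.exp (X ^ 2) * R := by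
    have hIeq : I = -Real.exp (-X ^ 2) / (2 * X) - R := by linarith
    rw [Uminus, ← hI, hIeq, mul_sub]
    have h3 : Real.exp (X ^ 2) * (-Real.exp (-X ^ 2) / (2 * X)) = -1 / (2 * X) := by
      rw [mul_div_assoc', mul_neg, hexp]
    rw [h3]
  have hUle : Uminus X ≤ -1 / (2 * X) := by
    rw [hU]
    have : 0 ≤ Real.exp (X ^ 2) * R := mul_nonneg (Real.exp_pos _).le hRnonneg
    linarith
  have hkey : Uminus X + 1 / (2 * X) = -(Real.exp (X ^ 2) * R) := by
    rw [hU]; ring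
  rw [hkey, abs_neg, abs_of_nonneg (mul_nonneg (Real.exp_pos _).le hRnonneg)]
  have hstep : Real.exp (X ^ 2) * R ≤ Uminus X / (2 * X ^ 2) := by
    rw [Uminus, ← hI]
    rw [mul_div_assoc]
    exact mul_le_mul_of_nonneg_left hRle (Real.exp_pos _).le
  have habs : |X| = -X := abs_of_neg hX
  have hnX : 0 < -X := neg_pos.mpr hX
  have h4 : (0:ℝ) < 4 * (-X) ^ 3 := mul_pos (by norm_num) (pow_pos hnX 3)
  have hfinal : Uminus X / (2 * X ^ 2) ≤ 1 / (4 * |X| ^ 3) := by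
    rw [habs, div_le_div_iff₀ (by positivity) h4]
    have heq : (-1 / (2 * X)) * (4 * (-X) ^ 3) = 1 * (2 * X ^ 2) := by
      field_simp; ring
    calc Uminus X * (4 * (-X) ^ 3) ≤ (-1 / (2 * X)) * (4 * (-X) ^ 3) :=
          mul_le_mul_of_nonneg_right hUle h4.le
      _ = 1 * (2 * X ^ 2) := heq
  linarith
end

section
/- Fix a bounded continuous g : ℝ → ℝ and let y⁻(x, ε) = e^{x²/ε} ∫_{-∞}^x e^{-t²/ε} g(t) dt. Then for every real K there is a constant C (one may take C = e^{K²} ∫_{-∞}^K e^{-T²} dT) such that for all ε > 0 and all real x with x ≤ K·√ε one has |y⁻(x, ε)| ≤ C·sup|g|·√ε. -/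
open MeasureTheory

private lemma shift_Iio (a : ℝ) (f : ℝ → ℝ) :
    (∫ t in Set.Iio a, f t) = ∫ s in Set.Iio (0 : ℝ), f (s + a) := by
  have A : MeasurableEmbedding fun x : ℝ => x + a :=
    (Homeomorph.addRight a).measurableEmbedding
  have h := A.setIntegral_map (μ := volume) f (Set.Iio a)
  rw [map_add_right_eq_self] at h
  rw [h]
  congr 1
  ext x
  simp [Set.mem_preimage]

private lemma gauss_shift (X : ℝ) :
    Real.exp (X ^ 2) * ∫ T in Set.Iio X, Real.exp (-T ^ 2) =
      ∫ s in Set.Iio (0 : ℝ), Real.exp (-2 * X * s - s ^ 2) := by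
  rw [← integral_const_mul,
    shift_Iio X (fun T => Real.exp (X ^ 2) * Real.exp (-T ^ 2))]
  refine setIntegral_congr_fun measurableSet_Iio fun s _ => ?_
  rw [← Real.exp_add]
  congr 1
  ring

private lemma integrable_shifted (K : ℝ) :
    Integrable (fun s : ℝ => Real.exp (-2 * K * s - s ^ 2)) := by
  have h : Integrable (fun u : ℝ => Real.exp (-(1 : ℝ) * u ^ 2)) :=
    integrable_exp_neg_mul_sq one_pos
  have hmp : MeasurePreserving (fun s : ℝ => s + K) volume volume :=
    measurePreserving_add_right volume K
  have h1 : Integrable (fun s : ℝ => Real.exp (-(1 : ℝ) * (s + K) ^ 2)) :=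
    (hmp.integrable_comp_emb (Homeomorph.addRight K).measurableEmbedding).2 h
  have h2 : Integrable
      (fun s : ℝ => Real.exp (K ^ 2) * Real.exp (-(1 : ℝ) * (s + K) ^ 2)) :=
    h1.const_mul _
  refine h2.congr ?_
  filter_upwards with s
  rw [← Real.exp_add]
  congr 1
  ring

private lemma F_mono {X K : ℝ} (hXK : X ≤ K) :
    Real.exp (X ^ 2) * ∫ T in Set.Iio X, Real.exp (-T ^ 2) ≤
      Real.exp (K ^ 2) * ∫ T in Set.Iio K, Real.exp (-T ^ 2) := by
  rw [gauss_shift, gauss_shift]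
  refine setIntegral_mono_on (integrable_shifted X).integrableOn
    (integrable_shifted K).integrableOn measurableSet_Iio fun s hs => ?_
  have hs' : s < 0 := hs
  exact Real.exp_le_exp.2 (by nlinarith)

/-- Interior estimate for `y⁻(x,ε) = e^{x²/ε} ∫_{-∞}^x e^{-t²/ε} g(t) dt`:
for every `K`, with `C = e^{K²} ∫_{-∞}^K e^{-T²} dT`, for all `ε > 0` and
`x ≤ K√ε` one has `|y⁻(x,ε)| ≤ C·sup|g|·√ε`. -/
theorem yminus_interior_estimate (g : ℝ → ℝ) (hg : Continuous g)
    (M : ℝ) (hM : ∀ x, |g x| ≤ M) (K : ℝ) :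
    ∀ ε : ℝ, 0 < ε → ∀ x : ℝ, x ≤ K * Real.sqrt ε →
      |Real.exp (x ^ 2 / ε) * ∫ t in Set.Iio x, Real.exp (-t ^ 2 / ε) * g t| ≤
        (Real.exp (K ^ 2) * ∫ T in Set.Iio K, Real.exp (-T ^ 2)) * M * Real.sqrt ε := by
  intro ε hε x hx
  set c : ℝ := Real.sqrt ε with hcdef
  have hc : 0 < c := Real.sqrt_pos.2 hε
  have hεc : ε = c ^ 2 := (Real.sq_sqrt hε.le).symm
  set X : ℝ := x / c with hXdef
  have hXK : X ≤ K := (div_le_iff₀ hc).2 hx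
  have hMnn : 0 ≤ M := (abs_nonneg _).trans (hM 0)
  have hrw : ∀ t : ℝ, Real.exp (-t ^ 2 / ε) = Real.exp (-(1 / ε) * t ^ 2) :=
    fun t => by congr 1; ring
  -- integrability of the integrand
  have hgauss : Integrable (fun t : ℝ => Real.exp (-(1 / ε) * t ^ 2)) :=
    integrable_exp_neg_mul_sq (by positivity)
  have hbound : Integrable (fun t : ℝ => M * Real.exp (-t ^ 2 / ε)) := by
    refine (hgauss.const_mul M).congr ?_
    filter_upwards with t
    rw [hrw t]
  have hInt : Integrable (fun t : ℝ => Real.exp (-t ^ 2 / ε) * g t) := by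
    refine Integrable.mono hbound
      ((Real.continuous_exp.comp ((continuous_pow 2).neg.div_const ε)).mul hg).aestronglyMeasurable ?_
    filter_upwards with t
    rw [Real.norm_eq_abs, Real.norm_eq_abs, abs_mul, Real.abs_exp,
      abs_of_nonneg (by positivity : (0:ℝ) ≤ M * Real.exp (-t ^ 2 / ε)), mul_comm M]
    exact mul_le_mul_of_nonneg_left (hM t) (Real.exp_pos _).le
  -- step 1 : bound inner integral by the constant M times the Gaussian integral
  have h1 : |∫ t in Set.Iio x, Real.exp (-t ^ 2 / ε) * g t| ≤
      ∫ t in Set.Iio x, M * Real.exp (-t ^ 2 / ε) := by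
    calc |∫ t in Set.Iio x, Real.exp (-t ^ 2 / ε) * g t|
        ≤ ∫ t in Set.Iio x, Real.exp (-t ^ 2 / ε) * |g t| := by
          simpa [Real.norm_eq_abs] using
            norm_integral_le_integral_norm (μ := volume.restrict (Set.Iio x))
              (fun t => Real.exp (-t ^ 2 / ε) * g t)
      _ ≤ ∫ t in Set.Iio x, M * Real.exp (-t ^ 2 / ε) := by
          have habs : Integrable (fun t : ℝ => Real.exp (-t ^ 2 / ε) * |g t|) := by
            refine hInt.abs.congr ?_
            filter_upwards with t
            rw [abs_mul, Real.abs_exp]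
          refine setIntegral_mono_on habs.integrableOn hbound.integrableOn
            measurableSet_Iio fun t _ => ?_
          rw [mul_comm M]
          exact mul_le_mul_of_nonneg_left (hM t) (Real.exp_pos _).le
  -- step 2 : substitution t = c T
  have hsub : (∫ t in Set.Iio x, Real.exp (-t ^ 2 / ε)) =
      c * ∫ T in Set.Iio X, Real.exp (-T ^ 2) := by
    have e1 : (∫ t in Set.Iio x, Real.exp (-t ^ 2 / ε)) =
        ∫ t in Set.Iic x, Real.exp (-t ^ 2 / ε) :=
      setIntegral_congr_set Iio_ae_eq_Iic
    have e2 : (∫ t in Set.Iic x, Real.exp (-t ^ 2 / ε)) =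
        ∫ t in Set.Ioi (-x), Real.exp (-t ^ 2 / ε) := by
      rw [← integral_comp_neg_Iic x (fun t => Real.exp (-t ^ 2 / ε))]
      refine setIntegral_congr_fun measurableSet_Iic fun t _ => ?_
      rw [neg_sq]
    have e3 : (∫ t in Set.Ioi (-x), Real.exp (-t ^ 2 / ε)) =
        ∫ t in Set.Ioi (-x), (fun u : ℝ => Real.exp (-u ^ 2)) (c⁻¹ * t) := by
      refine setIntegral_congr_fun measurableSet_Ioi fun t _ => ?_
      congr 1
      rw [hεc]
      field_simp
    have e4 : (∫ t in Set.Ioi (-x), (fun u : ℝ => Real.exp (-u ^ 2)) (c⁻¹ * t)) =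
        c * ∫ u in Set.Ioi (-X), Real.exp (-u ^ 2) := by
      rw [integral_comp_mul_left_Ioi (fun u : ℝ => Real.exp (-u ^ 2)) (-x)
        (inv_pos.2 hc), inv_inv, smul_eq_mul]
      congr 1
      rw [hXdef]
      field_simp
    have e5 : (∫ u in Set.Ioi (-X), Real.exp (-u ^ 2)) =
        ∫ T in Set.Iio X, Real.exp (-T ^ 2) := by
      rw [← integral_comp_neg_Iic X (fun u => Real.exp (-u ^ 2))]
      rw [← setIntegral_congr_set (Iio_ae_eq_Iic (a := X))]
      exact (setIntegral_congr_fun measurableSet_Iio fun t _ => by rw [neg_sq]).symm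
    rw [e1, e2, e3, e4, e5]
  -- step 3 : exponent identity
  have hexp : x ^ 2 / ε = X ^ 2 := by
    rw [hεc, hXdef, div_pow]
  -- assemble
  have hInn : 0 ≤ ∫ T in Set.Iio X, Real.exp (-T ^ 2) :=
    setIntegral_nonneg measurableSet_Iio fun T _ => (Real.exp_pos _).le
  calc |Real.exp (x ^ 2 / ε) * ∫ t in Set.Iio x, Real.exp (-t ^ 2 / ε) * g t|
      = Real.exp (x ^ 2 / ε) * |∫ t in Set.Iio x, Real.exp (-t ^ 2 / ε) * g t| := by
        rw [abs_mul, Real.abs_exp]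
    _ ≤ Real.exp (x ^ 2 / ε) * ∫ t in Set.Iio x, M * Real.exp (-t ^ 2 / ε) :=
        mul_le_mul_of_nonneg_left h1 (Real.exp_pos _).le
    _ = Real.exp (X ^ 2) * (M * (c * ∫ T in Set.Iio X, Real.exp (-T ^ 2))) := by
        rw [hexp, integral_const_mul, hsub]
    _ = (Real.exp (X ^ 2) * ∫ T in Set.Iio X, Real.exp (-T ^ 2)) * M * c := by
        ring
    _ ≤ (Real.exp (K ^ 2) * ∫ T in Set.Iio K, Real.exp (-T ^ 2)) * M * c := by
        refine mul_le_mul_of_nonneg_right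
          (mul_le_mul_of_nonneg_right (F_mono hXK) hMnn) hc.le
end

section
/- Let g : ℝ → ℝ be of class C² with g, g', g'' bounded, and set Sg(x) = (g(x) − g(0))/x for x ≠ 0, Sg(0) = g'(0). Define y⁻(x, ε) = e^{x²/ε} ∫_{-∞}^x e^{-t²/ε} g(t) dt and U⁻(X) = e^{X²} ∫_{-∞}^X e^{-T²} dT. Then for every ε > 0 and every x ∈ ℝ, y⁻(x, ε) = g(0)·√ε·U⁻(x/√ε) − (ε/2)·Sg(x) + (ε/2)·e^{x²/ε} ∫_{-∞}^x e^{-t²/ε} (Sg)'(t) dt. -/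
open MeasureTheory

/-- `Sg(x) = (g(x) - g(0))/x` for `x ≠ 0`, `Sg(0) = g'(0)`. -/
noncomputable def Sop (g : ℝ → ℝ) (x : ℝ) : ℝ :=
  if x = 0 then deriv g 0 else (g x - g 0) / x

section Aux

variable {g : ℝ → ℝ} (hg : ContDiff ℝ 2 g)

include hg in
lemma aux_hg1 : ContDiff ℝ 1 (deriv g) := by
  rw [show (2 : WithTop ℕ∞) = 1 + 1 from rfl, contDiff_succ_iff_deriv] at hg
  exact hg.2.2

include hg in
lemma aux_dg : Differentiable ℝ g := hg.differentiable (by norm_num)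

include hg in
lemma aux_dg' : Differentiable ℝ (deriv g) := (aux_hg1 hg).differentiable (by norm_num)

include hg in
lemma aux_cg'' : Continuous (deriv (deriv g)) := (aux_hg1 hg).continuous_deriv le_rfl

include hg in
lemma Sop_eq_integral (x : ℝ) : Sop g x = ∫ s in (0:ℝ)..1, deriv g (s * x) := by
  rcases eq_or_ne x 0 with rfl | hx
  · simp [Sop]
  · rw [Sop, if_neg hx]
    rw [intervalIntegral.integral_comp_mul_right (deriv g) hx]
    rw [intervalIntegral.integral_deriv_eq_sub
      (fun t _ => aux_dg hg t)
      ((hg.continuous_deriv one_le_two).intervalIntegrable _ _)]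
    simp only [one_mul, zero_mul, smul_eq_mul]
    field_simp

include hg in
lemma hasDerivAt_Sop (x : ℝ) :
    HasDerivAt (Sop g) (∫ s in (0:ℝ)..1, deriv (deriv g) (s * x) * s) x := by
  have hSrep : Sop g = fun y => ∫ s in (0:ℝ)..1, deriv g (s * y) :=
    funext fun y => Sop_eq_integral hg y
  rw [hSrep]
  have hcont : ∀ y : ℝ, Continuous (fun s : ℝ => deriv g (s * y)) := fun y =>
    (hg.continuous_deriv one_le_two).comp (continuous_id.mul continuous_const)
  have hcont' : Continuous (fun s : ℝ => deriv (deriv g) (s * x) * s) :=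
    ((aux_cg'' hg).comp (continuous_id.mul continuous_const)).mul continuous_id
  -- bound for the derivative on a ball of radius 1 around x
  obtain ⟨C, hC⟩ : ∃ C, ∀ s ∈ Set.Icc (0:ℝ) 1, ∀ y ∈ Metric.ball x 1,
      ‖deriv (deriv g) (s * y) * s‖ ≤ C := by
    obtain ⟨C, hC⟩ := (isCompact_Icc (a := -(|x| + 1)) (b := |x| + 1)).exists_bound_of_continuousOn
      ((aux_cg'' hg).continuousOn (s := Set.Icc (-(|x|+1)) (|x|+1)))
    refine ⟨|C| * 1, fun s hs' y hy => ?_⟩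
    have hy' : |y - x| < 1 := by rwa [Metric.mem_ball, Real.dist_eq] at hy
    have hyb : |y| ≤ |x| + 1 := by
      calc |y| = |(y - x) + x| := by ring_nf
        _ ≤ |y - x| + |x| := abs_add_le _ _
        _ ≤ |x| + 1 := by linarith
    have habs : |s * y| ≤ |x| + 1 := by
      rw [abs_mul]
      calc |s| * |y| ≤ 1 * (|x| + 1) :=
            mul_le_mul (by rw [abs_of_nonneg hs'.1]; exact hs'.2) hyb (abs_nonneg _)
              (by norm_num)
        _ = |x| + 1 := one_mul _
    have hsy : s * y ∈ Set.Icc (-(|x| + 1)) (|x| + 1) := by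
      constructor <;> [linarith [abs_le.mp habs]; linarith [abs_le.mp habs]]
    rw [norm_mul]
    have h1 : ‖deriv (deriv g) (s * y)‖ ≤ |C| := (hC _ hsy).trans (le_abs_self C)
    have h2 : ‖s‖ ≤ 1 := by rw [Real.norm_eq_abs, abs_of_nonneg hs'.1]; exact hs'.2
    exact mul_le_mul h1 h2 (norm_nonneg _) (abs_nonneg C)
  have key := intervalIntegral.hasDerivAt_integral_of_dominated_loc_of_deriv_le
    (F := fun y s => deriv g (s * y))
    (F' := fun y s => deriv (deriv g) (s * y) * s)
    (x₀ := x) (a := 0) (b := 1) (bound := fun _ => C)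
    (μ := MeasureTheory.volume) (Metric.ball_mem_nhds x one_pos)
    (Filter.Eventually.of_forall fun y => (hcont y).aestronglyMeasurable)
    ((hcont x).intervalIntegrable _ _)
    hcont'.aestronglyMeasurable
    (Filter.Eventually.of_forall fun s hs y hy => by
      rw [Set.uIoc_of_le (by norm_num : (0:ℝ) ≤ 1)] at hs
      exact hC s ⟨hs.1.le, hs.2⟩ y hy)
    (intervalIntegrable_const)
    (Filter.Eventually.of_forall fun s _ y _ => by
      have h1 : HasDerivAt (fun z : ℝ => s * z) s y := by
        simpa using (hasDerivAt_id y).const_mul s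
      exact ((aux_dg' hg (s * y)).hasDerivAt.comp y h1))
  exact key.2

include hg in
lemma deriv_Sop_eq (x : ℝ) :
    deriv (Sop g) x = ∫ s in (0:ℝ)..1, deriv (deriv g) (s * x) * s :=
  (hasDerivAt_Sop hg x).deriv

variable (M : ℝ) (hM : ∀ x, |g x| ≤ M ∧ |deriv g x| ≤ M ∧ |deriv (deriv g) x| ≤ M)

include hg hM in
lemma abs_Sop_le (x : ℝ) : |Sop g x| ≤ M := by
  rw [Sop_eq_integral hg x, ← Real.norm_eq_abs]
  have := intervalIntegral.norm_integral_le_of_norm_le_const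
    (C := M) (f := fun s => deriv g (s * x)) (a := 0) (b := 1)
    (fun s _ => (hM (s * x)).2.1)
  simpa using this

include hg hM in
lemma abs_deriv_Sop_le (x : ℝ) : |deriv (Sop g) x| ≤ M := by
  rw [deriv_Sop_eq hg x, ← Real.norm_eq_abs]
  have hMnn : 0 ≤ M := le_trans (abs_nonneg _) (hM 0).1
  have := intervalIntegral.norm_integral_le_of_norm_le_const
    (C := M) (f := fun s => deriv (deriv g) (s * x) * s) (a := 0) (b := 1)
    (fun s hs => by
      have hs' : s ∈ Set.Ioc (0:ℝ) 1 := by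
        rwa [Set.uIoc_of_le (by norm_num : (0:ℝ) ≤ 1)] at hs
      rw [norm_mul]
      calc ‖deriv (deriv g) (s * x)‖ * ‖s‖ ≤ M * 1 := by
            apply mul_le_mul ((hM (s * x)).2.2) _ (norm_nonneg _) hMnn
            rw [Real.norm_eq_abs, abs_of_nonneg hs'.1.le]; exact hs'.2
        _ = M := mul_one M)
  simpa using this

end Aux

/-- integrability of `exp(-t²/ε) * f t` for bounded a.e.-strongly-measurable `f`. -/
lemma integrable_exp_mul_bounded {ε : ℝ} (hε : 0 < ε) {f : ℝ → ℝ} {C : ℝ}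
    (hf : AEStronglyMeasurable f (volume : Measure ℝ)) (hC : ∀ t, |f t| ≤ C) :
    Integrable (fun t : ℝ => Real.exp (-t ^ 2 / ε) * f t) := by
  have base : Integrable (fun t : ℝ => Real.exp (-(1/ε) * t ^ 2)) :=
    integrable_exp_neg_mul_sq (by positivity)
  refine Integrable.mono' (base.const_mul C) ?_ ?_
  · exact ((Real.continuous_exp.comp (by continuity)).aestronglyMeasurable).mul hf
  · refine Filter.Eventually.of_forall fun t => ?_
    have h1 : -t ^ 2 / ε = -(1/ε) * t ^ 2 := by ring
    rw [Real.norm_eq_abs, abs_mul, abs_of_pos (Real.exp_pos _), h1, mul_comm]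
    exact mul_le_mul_of_nonneg_right (hC t) (Real.exp_pos _).le

lemma tendsto_exp_neg_sq_div_atBot {ε : ℝ} (hε : 0 < ε) :
    Filter.Tendsto (fun t : ℝ => Real.exp (-t ^ 2 / ε)) Filter.atBot (nhds 0) := by
  have hsq : Filter.Tendsto (fun t : ℝ => t ^ 2) Filter.atBot Filter.atTop :=
    Filter.Tendsto.congr (fun t => by simp [Function.comp_def])
      ((Filter.tendsto_pow_atTop (n := 2) two_ne_zero).comp Filter.tendsto_neg_atBot_atTop)
  have h2 : Filter.Tendsto (fun t : ℝ => -t ^ 2 / ε) Filter.atBot Filter.atBot :=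
    Filter.Tendsto.atBot_div_const hε
      (Filter.Tendsto.congr (fun t => rfl) (Filter.tendsto_neg_atTop_atBot.comp hsq))
  exact Real.tendsto_exp_atBot.comp h2

/-- change of variables on `Iio`. -/
lemma integral_comp_mul_left_Iio' (f : ℝ → ℝ) (a : ℝ) {b : ℝ} (hb : 0 < b) :
    (∫ x in Set.Iio a, f (b * x)) = b⁻¹ • ∫ x in Set.Iio (b * a), f x := by
  rw [← integral_indicator (measurableSet_Iio (a := a)),
    ← integral_indicator (measurableSet_Iio (a := b * a)),
    ← abs_of_pos (inv_pos.mpr hb), ← Measure.integral_comp_mul_left]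
  congr 1
  ext1 x
  rw [← Set.indicator_comp_right, Set.preimage_const_mul_Iio₀ _ hb,
    mul_div_cancel_left₀ _ hb.ne']
  rfl

lemma mul_Sop (g : ℝ → ℝ) (t : ℝ) : t * Sop g t = g t - g 0 := by
  rcases eq_or_ne t 0 with rfl | ht
  · simp
  · rw [Sop, if_neg ht]; field_simp

/-- One integration by parts: for `g` of class `C²` with `g, g', g''` bounded,
`y⁻(x,ε) = g(0)√ε·U⁻(x/√ε) - (ε/2)·Sg(x)
  + (ε/2)·e^{x²/ε} ∫_{-∞}^x e^{-t²/ε} (Sg)'(t) dt`. -/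
theorem yminus_integration_by_parts (g : ℝ → ℝ) (hg : ContDiff ℝ 2 g)
    (M : ℝ) (hM : ∀ x, |g x| ≤ M ∧ |deriv g x| ≤ M ∧ |deriv (deriv g) x| ≤ M) :
    ∀ ε : ℝ, 0 < ε → ∀ x : ℝ,
      Real.exp (x ^ 2 / ε) * ∫ t in Set.Iio x, Real.exp (-t ^ 2 / ε) * g t
        = g 0 * Real.sqrt ε *
            (Real.exp ((x / Real.sqrt ε) ^ 2) *
              ∫ T in Set.Iio (x / Real.sqrt ε), Real.exp (-T ^ 2))
          - ε / 2 * Sop g x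
          + ε / 2 *
            (Real.exp (x ^ 2 / ε) *
              ∫ t in Set.Iio x, Real.exp (-t ^ 2 / ε) * deriv (Sop g) t) := by
  intro ε hε x
  have hMnn : 0 ≤ M := le_trans (abs_nonneg _) (hM 0).1
  have hsε : 0 < Real.sqrt ε := Real.sqrt_pos.mpr hε
  -- derivative of t ↦ exp(-t²/ε)
  have hexp : ∀ t : ℝ, HasDerivAt (fun t : ℝ => Real.exp (-t ^ 2 / ε))
      (Real.exp (-t ^ 2 / ε) * (-2 * t / ε)) t := by
    intro t
    have h1 : HasDerivAt (fun t : ℝ => -t ^ 2 / ε) (-2 * t / ε) t := by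
      have := ((hasDerivAt_pow 2 t).neg).div_const ε
      simpa [pow_one] using this
    exact h1.exp
  -- F and its derivative
  set F : ℝ → ℝ := fun t => -(ε / 2) * (Real.exp (-t ^ 2 / ε) * Sop g t) with hF
  have hF' : ∀ t : ℝ, HasDerivAt F
      (Real.exp (-t ^ 2 / ε) * (g t - g 0)
        - ε / 2 * (Real.exp (-t ^ 2 / ε) * deriv (Sop g) t)) t := by
    intro t
    have h := (((hexp t).mul (hasDerivAt_Sop hg t)).const_mul (-(ε / 2)))
    have hd : deriv (Sop g) t = ∫ s in (0:ℝ)..1, deriv (deriv g) (s * t) * s :=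
      deriv_Sop_eq hg t
    refine h.congr_deriv ?_
    rw [← hd, ← mul_Sop g t]
    field_simp
    ring
  -- boundedness facts
  have hSb : ∀ t, |Sop g t| ≤ M := abs_Sop_le hg M hM
  have hSdb : ∀ t, |deriv (Sop g) t| ≤ M := abs_deriv_Sop_le hg M hM
  -- limit of F at -∞
  have hFlim : Filter.Tendsto F Filter.atBot (nhds 0) := by
    apply squeeze_zero_norm (a := fun t => ε / 2 * M * Real.exp (-t ^ 2 / ε))
    · intro t
      rw [hF, Real.norm_eq_abs, abs_mul, abs_mul, abs_of_pos (Real.exp_pos _),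
        abs_neg, abs_of_pos (by positivity : (0:ℝ) < ε / 2)]
      calc ε / 2 * (Real.exp (-t ^ 2 / ε) * |Sop g t|)
          ≤ ε / 2 * (Real.exp (-t ^ 2 / ε) * M) := by
            apply mul_le_mul_of_nonneg_left _ (by positivity)
            exact mul_le_mul_of_nonneg_left (hSb t) (Real.exp_pos _).le
        _ = ε / 2 * M * Real.exp (-t ^ 2 / ε) := by ring
    · have := (tendsto_exp_neg_sq_div_atBot hε).const_mul (ε / 2 * M)
      simpa using this
  -- measurability of deriv (Sop g)
  have hSdm : AEStronglyMeasurable (deriv (Sop g)) (volume : Measure ℝ) :=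
    (stronglyMeasurable_deriv (Sop g)).aestronglyMeasurable
  -- integrability pieces
  have hint1 : Integrable (fun t : ℝ => Real.exp (-t ^ 2 / ε) * g t) :=
    integrable_exp_mul_bounded hε hg.continuous.aestronglyMeasurable (fun t => (hM t).1)
  have hint2 : Integrable (fun t : ℝ => Real.exp (-t ^ 2 / ε) * (g t - g 0)) :=
    integrable_exp_mul_bounded hε (hg.continuous.aestronglyMeasurable.sub
      aestronglyMeasurable_const)
      (fun t => (abs_sub (g t) (g 0)).trans (add_le_add (hM t).1 (hM 0).1))
  have hint3 : Integrable (fun t : ℝ => Real.exp (-t ^ 2 / ε) * deriv (Sop g) t) :=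
    integrable_exp_mul_bounded hε hSdm hSdb
  have hint0 : Integrable (fun t : ℝ => Real.exp (-t ^ 2 / ε)) := by
    have := integrable_exp_mul_bounded hε (f := fun _ => (1:ℝ))
      aestronglyMeasurable_const (C := 1) (fun t => by norm_num)
    simpa using this
  -- the FTC on Iic x
  have hFTC : ∫ t in Set.Iic x,
      (Real.exp (-t ^ 2 / ε) * (g t - g 0)
        - ε / 2 * (Real.exp (-t ^ 2 / ε) * deriv (Sop g) t)) = F x - 0 := by
    apply integral_Iic_of_hasDerivAt_of_tendsto' (fun t _ => hF' t)
    · exact (hint2.sub (hint3.const_mul (ε / 2))).integrableOn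
    · exact hFlim
  rw [sub_zero] at hFTC
  rw [integral_sub hint2.integrableOn ((hint3.const_mul (ε / 2)).integrableOn),
    integral_const_mul] at hFTC
  -- expand the integrand: exp * g - exp * g0
  have hsplit : ∫ t in Set.Iic x, Real.exp (-t ^ 2 / ε) * (g t - g 0)
      = (∫ t in Set.Iic x, Real.exp (-t ^ 2 / ε) * g t)
        - g 0 * ∫ t in Set.Iic x, Real.exp (-t ^ 2 / ε) := by
    rw [← integral_const_mul, ← integral_sub hint1.integrableOn
      ((hint0.const_mul (g 0)).integrableOn)]
    congr 1; ext t; ring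
  -- Gaussian substitution
  have hsub : (∫ t in Set.Iio x, Real.exp (-t ^ 2 / ε))
      = Real.sqrt ε * ∫ T in Set.Iio (x / Real.sqrt ε), Real.exp (-T ^ 2) := by
    have h2 := integral_comp_mul_left_Iio' (fun T : ℝ => Real.exp (-T ^ 2)) x
      (inv_pos.mpr hsε)
    simp only [inv_inv, smul_eq_mul] at h2
    calc (∫ t in Set.Iio x, Real.exp (-t ^ 2 / ε))
        = ∫ t in Set.Iio x, Real.exp (-((Real.sqrt ε)⁻¹ * t) ^ 2) := by
          refine setIntegral_congr_fun measurableSet_Iio fun t _ => ?_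
          congr 1
          rw [mul_pow, inv_pow, Real.sq_sqrt hε.le]
          field_simp
      _ = Real.sqrt ε * ∫ T in Set.Iio ((Real.sqrt ε)⁻¹ * x), Real.exp (-T ^ 2) := h2
      _ = Real.sqrt ε * ∫ T in Set.Iio (x / Real.sqrt ε), Real.exp (-T ^ 2) := by
          rw [inv_mul_eq_div]
  -- exp(x²/ε) = exp((x/√ε)²)
  have hexpx : Real.exp ((x / Real.sqrt ε) ^ 2) = Real.exp (x ^ 2 / ε) := by
    congr 1
    rw [div_pow, Real.sq_sqrt hε.le]
  -- exp(x²/ε) * exp(-x²/ε) = 1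
  have hexp1 : Real.exp (x ^ 2 / ε) * Real.exp (-x ^ 2 / ε) = 1 := by
    rw [← Real.exp_add, show x ^ 2 / ε + -x ^ 2 / ε = 0 by ring, Real.exp_zero]
  -- convert Iio integrals to Iic
  rw [show (∫ t in Set.Iio x, Real.exp (-t ^ 2 / ε) * g t)
      = ∫ t in Set.Iic x, Real.exp (-t ^ 2 / ε) * g t from
      (integral_Iic_eq_integral_Iio).symm,
    show (∫ t in Set.Iio x, Real.exp (-t ^ 2 / ε) * deriv (Sop g) t)
      = ∫ t in Set.Iic x, Real.exp (-t ^ 2 / ε) * deriv (Sop g) t from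
      (integral_Iic_eq_integral_Iio).symm]
  rw [hsplit] at hFTC
  have hIic0 : (∫ t in Set.Iic x, Real.exp (-t ^ 2 / ε))
      = ∫ t in Set.Iio x, Real.exp (-t ^ 2 / ε) := integral_Iic_eq_integral_Iio
  -- solve for the main integral from hFTC
  have hmain : (∫ t in Set.Iic x, Real.exp (-t ^ 2 / ε) * g t)
      = g 0 * (Real.sqrt ε * ∫ T in Set.Iio (x / Real.sqrt ε), Real.exp (-T ^ 2))
        + ε / 2 * (∫ t in Set.Iic x, Real.exp (-t ^ 2 / ε) * deriv (Sop g) t)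
        + F x := by
    rw [← hsub, ← hIic0]
    linarith [hFTC]
  rw [hmain, hexpx, hF]
  have hFx : Real.exp (x ^ 2 / ε) * (-(ε / 2) * (Real.exp (-x ^ 2 / ε) * Sop g x))
      = -(ε / 2) * Sop g x := by
    calc Real.exp (x ^ 2 / ε) * (-(ε / 2) * (Real.exp (-x ^ 2 / ε) * Sop g x))
        = (Real.exp (x ^ 2 / ε) * Real.exp (-x ^ 2 / ε)) * (-(ε / 2) * Sop g x) := by ring
      _ = -(ε / 2) * Sop g x := by rw [hexp1, one_mul]
  ring_nf
  ring_nf at hFx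
  linarith [hFx]
end

section
/- Let g : ℝ → ℝ be continuous and bounded. Then ∫_{-∞}^{∞} e^{-t²/ε} g(t) dt = 0 for every ε ∈ (0, 1] if and only if g is odd, i.e. g(t) + g(−t) = 0 for all t ∈ ℝ. -/
open MeasureTheory


lemma integrable_exp_sq_mul' {b : ℝ} (hb : 0 < b) (h : ℝ → ℝ) (hc : Continuous h)
    (C : ℝ) (hC : ∀ x, |h x| ≤ C) :
    Integrable (fun t : ℝ => Real.exp (-b * t ^ 2) * h t) := by
  have := (integrable_exp_neg_mul_sq hb).bdd_mul hc.aestronglyMeasurable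
    (Filter.Eventually.of_forall fun x => by simpa using hC x)
  simpa [mul_comm] using this

lemma poly_moment_rw (h : ℝ → ℝ) (p : Polynomial ℝ) (t : ℝ) :
    Polynomial.eval (Real.exp (-t ^ 2)) p * (Real.exp (-t ^ 2) * h t)
      = ∑ i ∈ Finset.range (p.natDegree + 1),
          p.coeff i * (Real.exp (-((i : ℝ) + 1) * t ^ 2) * h t) := by
  rw [Polynomial.eval_eq_sum_range, Finset.sum_mul]
  refine Finset.sum_congr rfl fun i _ => ?_
  have hx : (Real.exp (-t ^ 2)) ^ i * Real.exp (-t ^ 2)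
      = Real.exp (-((i : ℝ) + 1) * t ^ 2) := by
    rw [← Real.exp_nat_mul, ← Real.exp_add]
    congr 1; ring
  calc p.coeff i * Real.exp (-t ^ 2) ^ i * (Real.exp (-t ^ 2) * h t)
      = p.coeff i * ((Real.exp (-t ^ 2) ^ i * Real.exp (-t ^ 2)) * h t) := by ring
    _ = _ := by rw [hx]

lemma key_even (h : ℝ → ℝ) (hc : Continuous h) (C : ℝ) (hC : ∀ x, |h x| ≤ C)
    (heven : ∀ t, h (-t) = h t)
    (hint : ∀ n : ℕ, ∫ t : ℝ, Real.exp (-((n : ℝ) + 1) * t ^ 2) * h t = 0) :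
    ∀ t, h t = 0 := by
  have hC0 : 0 ≤ C := le_trans (abs_nonneg _) (hC 0)
  set f : ℝ → ℝ := fun y => y * h (Real.sqrt (-Real.log y)) with hf
  have hfe : ∀ t : ℝ, f (Real.exp (-t ^ 2)) = Real.exp (-t ^ 2) * h t := by
    intro t
    simp only [hf, Real.log_exp, neg_neg, Real.sqrt_sq_eq_abs]
    rcases abs_cases t with ⟨h1, _⟩ | ⟨h1, _⟩
    · rw [h1]
    · rw [h1, heven]
  have hfc : ContinuousOn f (Set.Icc 0 1) := by
    intro y hy
    rcases eq_or_ne y 0 with rfl | hy0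
    · have hb : ∀ z ∈ Set.Icc (0:ℝ) 1, ‖f z‖ ≤ C * z := by
        intro z hz
        have : |f z| ≤ C * z := by
          rw [hf]
          simp only [abs_mul, abs_of_nonneg hz.1]
          calc z * |h (Real.sqrt (-Real.log z))| ≤ z * C :=
                mul_le_mul_of_nonneg_left (hC _) hz.1
            _ = C * z := mul_comm _ _
        simpa using this
      have hlim : Filter.Tendsto (fun z : ℝ => C * z) (nhdsWithin 0 (Set.Icc 0 1)) (nhds 0) := by
        have : Filter.Tendsto (fun z : ℝ => C * z) (nhds 0) (nhds 0) := by
          exact (continuous_const.mul continuous_id).tendsto' (0 : ℝ) 0 (by simp)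
        exact this.mono_left nhdsWithin_le_nhds
      have htends : Filter.Tendsto f (nhdsWithin 0 (Set.Icc 0 1)) (nhds 0) := by
        apply squeeze_zero_norm' _ hlim
        filter_upwards [self_mem_nhdsWithin] with z hz using hb z hz
      have hf0 : f 0 = 0 := by simp [hf]
      unfold ContinuousWithinAt
      rw [hf0]
      exact htends
    · exact (continuousAt_id.mul
        (hc.continuousAt.comp (Real.continuous_sqrt.continuousAt.comp
          (Real.continuousAt_log hy0).neg))).continuousWithinAt
  have hterm_int : ∀ p : Polynomial ℝ, ∀ i ∈ Finset.range (p.natDegree + 1),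
      Integrable (fun t : ℝ => p.coeff i * (Real.exp (-((i : ℝ) + 1) * t ^ 2) * h t)) :=
    fun p i _ => (integrable_exp_sq_mul' (by positivity) h hc C hC).const_mul _
  have hpoly : ∀ p : Polynomial ℝ,
      ∫ t : ℝ, Polynomial.eval (Real.exp (-t ^ 2)) p * (Real.exp (-t ^ 2) * h t) = 0 := by
    intro p
    rw [integral_congr_ae (Filter.Eventually.of_forall (poly_moment_rw h p)),
      integral_finset_sum _ (hterm_int p)]
    exact Finset.sum_eq_zero fun i _ => by rw [integral_const_mul, hint i, mul_zero]
  set I : ℝ := ∫ t : ℝ, (Real.exp (-t ^ 2) * h t) ^ 2 with hI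
  have hsq_cont : Continuous fun t : ℝ => (Real.exp (-t ^ 2) * h t) ^ 2 := by
    exact ((Real.continuous_exp.comp (continuous_pow 2).neg).mul hc).pow 2
  have hsq_int : Integrable fun t : ℝ => (Real.exp (-t ^ 2) * h t) ^ 2 := by
    have h2 : Integrable (fun t : ℝ => Real.exp (-(2:ℝ) * t ^ 2) * (h t * h t)) :=
      integrable_exp_sq_mul' (by norm_num) (fun t => h t * h t) (hc.mul hc) (C * C)
        (fun x => by
          rw [abs_mul]
          exact mul_le_mul (hC x) (hC x) (abs_nonneg _) hC0)
    have hrw : ∀ t : ℝ, (Real.exp (-t ^ 2) * h t) ^ 2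
        = Real.exp (-(2:ℝ) * t ^ 2) * (h t * h t) := by
      intro t
      have : Real.exp (-t ^ 2) * Real.exp (-t ^ 2) = Real.exp (-(2:ℝ) * t ^ 2) := by
        rw [← Real.exp_add]; congr 1; ring
      calc (Real.exp (-t ^ 2) * h t) ^ 2
          = (Real.exp (-t ^ 2) * Real.exp (-t ^ 2)) * (h t * h t) := by ring
        _ = _ := by rw [this]
    simpa only [hrw] using h2
  have hInonneg : 0 ≤ I := integral_nonneg fun t => sq_nonneg _
  have hmem : ∀ t : ℝ, Real.exp (-t ^ 2) ∈ Set.Icc (0:ℝ) 1 := by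
    intro t
    exact ⟨(Real.exp_pos _).le, Real.exp_le_one_iff.mpr (neg_nonpos.mpr (sq_nonneg t))⟩
  have hbound : ∀ δ : ℝ, 0 < δ → I ≤ δ * (C * Real.sqrt Real.pi) := by
    intro δ hδ
    obtain ⟨p, hp⟩ := exists_polynomial_near_of_continuousOn 0 1 f hfc δ hδ
    have hPint : Integrable fun t : ℝ =>
        Polynomial.eval (Real.exp (-t ^ 2)) p * (Real.exp (-t ^ 2) * h t) := by
      rw [integrable_congr (Filter.Eventually.of_forall (poly_moment_rw h p))]
      exact integrable_finset_sum _ (hterm_int p)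
    have hdiff : I - 0 = ∫ t : ℝ,
        (f (Real.exp (-t ^ 2)) - Polynomial.eval (Real.exp (-t ^ 2)) p)
          * (Real.exp (-t ^ 2) * h t) := by
      rw [← hpoly p, hI, ← integral_sub hsq_int hPint]
      congr 1
      funext t
      rw [← hfe t]
      ring
    have hgint : Integrable (fun t : ℝ => δ * (C * Real.exp (-t ^ 2))) := by
      have h1 := integrable_exp_neg_mul_sq (by norm_num : (0:ℝ) < 1)
      have h2 := (h1.const_mul C).const_mul δ
      apply h2.congr
      filter_upwards with t
      norm_num
    have hptwise : ∀ t : ℝ,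
        ‖(f (Real.exp (-t ^ 2)) - Polynomial.eval (Real.exp (-t ^ 2)) p)
          * (Real.exp (-t ^ 2) * h t)‖ ≤ δ * (C * Real.exp (-t ^ 2)) := by
      intro t
      rw [norm_mul]
      have h1 : ‖f (Real.exp (-t ^ 2)) - Polynomial.eval (Real.exp (-t ^ 2)) p‖ ≤ δ := by
        rw [Real.norm_eq_abs, abs_sub_comm]
        exact (hp _ (hmem t)).le
      have h2 : ‖Real.exp (-t ^ 2) * h t‖ ≤ Real.exp (-t ^ 2) * C := by
        rw [norm_mul, Real.norm_eq_abs, Real.norm_eq_abs, abs_of_pos (Real.exp_pos _)]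
        exact mul_le_mul_of_nonneg_left (hC t) (Real.exp_pos _).le
      calc ‖f (Real.exp (-t ^ 2)) - Polynomial.eval (Real.exp (-t ^ 2)) p‖
            * ‖Real.exp (-t ^ 2) * h t‖
          ≤ δ * (Real.exp (-t ^ 2) * C) :=
            mul_le_mul h1 h2 (norm_nonneg _) hδ.le
        _ = δ * (C * Real.exp (-t ^ 2)) := by ring
    have hnorm : ‖I - 0‖ ≤ ∫ t : ℝ, δ * (C * Real.exp (-t ^ 2)) := by
      rw [hdiff]
      exact norm_integral_le_of_norm_le hgint (Filter.Eventually.of_forall hptwise)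
    have hval : ∫ t : ℝ, δ * (C * Real.exp (-t ^ 2)) = δ * (C * Real.sqrt Real.pi) := by
      rw [integral_const_mul, integral_const_mul]
      have hg : ∫ t : ℝ, Real.exp (-t ^ 2) = Real.sqrt Real.pi := by
        have := integral_gaussian 1
        simpa using this
      rw [hg]
    calc I = ‖I - 0‖ := by rw [sub_zero, Real.norm_eq_abs, abs_of_nonneg hInonneg]
      _ ≤ ∫ t : ℝ, δ * (C * Real.exp (-t ^ 2)) := hnorm
      _ = δ * (C * Real.sqrt Real.pi) := hval
  have hclaim : ∀ δ : ℝ, 0 < δ → I ≤ δ := by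
    intro δ hδ
    have hK : 0 ≤ C * Real.sqrt Real.pi := mul_nonneg hC0 (Real.sqrt_nonneg _)
    have h1 := hbound (δ / (C * Real.sqrt Real.pi + 1)) (by positivity)
    calc I ≤ δ / (C * Real.sqrt Real.pi + 1) * (C * Real.sqrt Real.pi) := h1
      _ ≤ δ := by
        rw [div_mul_eq_mul_div, div_le_iff₀ (by positivity)]
        nlinarith
  have hI0 : I = 0 := by
    refine le_antisymm ?_ hInonneg
    by_contra hne
    push_neg at hne
    linarith [hclaim (I / 2) (by linarith)]
  have hae := (integral_eq_zero_iff_of_nonneg (fun t => sq_nonneg _) hsq_int).mp (hI ▸ hI0)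
  have heq : (fun t : ℝ => (Real.exp (-t ^ 2) * h t) ^ 2) = fun _ => (0:ℝ) :=
    (hsq_cont.ae_eq_iff_eq volume continuous_const).mp hae
  intro t
  have h1 : Real.exp (-t ^ 2) * h t = 0 := by
    have h2 := congrFun heq t
    simpa [pow_eq_zero_iff] using h2
  rcases mul_eq_zero.mp h1 with h2 | h2
  · exact absurd h2 (Real.exp_ne_zero _)
  · exact h2

/-- For `g` continuous and bounded, `∫_{-∞}^{∞} e^{-t²/ε} g(t) dt = 0` for all
`ε ∈ (0,1]` if and only if `g` is odd. -/
theorem integral_exp_mul_eq_zero_iff_odd (g : ℝ → ℝ) (hg : Continuous g)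
    (M : ℝ) (hM : ∀ x, |g x| ≤ M) :
    (∀ ε ∈ Set.Ioc (0 : ℝ) 1, ∫ t : ℝ, Real.exp (-t ^ 2 / ε) * g t = 0) ↔
      ∀ t : ℝ, g t + g (-t) = 0 := by
  constructor
  · intro hI t
    set h : ℝ → ℝ := fun t => g t + g (-t) with hh
    have hc : Continuous h := hg.add (hg.comp continuous_neg)
    have hbd : ∀ x, |h x| ≤ M + M := fun x =>
      (abs_add_le _ _).trans (add_le_add (hM x) (hM (-x)))
    have heven : ∀ s : ℝ, h (-s) = h s := fun s => by simp [hh, add_comm]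
    have hint : ∀ n : ℕ, ∫ s : ℝ, Real.exp (-((n : ℝ) + 1) * s ^ 2) * h s = 0 := by
      intro n
      have hn1 : (0:ℝ) < (n:ℝ) + 1 := by positivity
      have hε : (1:ℝ)/((n:ℝ)+1) ∈ Set.Ioc (0:ℝ) 1 :=
        ⟨by positivity, by rw [div_le_one hn1]; linarith [Nat.cast_nonneg (α := ℝ) n]⟩
      have h1 := hI _ hε
      have hexp : ∀ s : ℝ, Real.exp (-s ^ 2 / (1/((n:ℝ)+1)))
          = Real.exp (-((n:ℝ)+1) * s ^ 2) := by
        intro s; congr 1; field_simp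
      simp_rw [hexp] at h1
      have h2 : ∫ s : ℝ, Real.exp (-((n:ℝ)+1) * s ^ 2) * g (-s) = 0 := by
        have h3 := integral_neg_eq_self
          (fun s : ℝ => Real.exp (-((n:ℝ)+1) * s ^ 2) * g (-s)) volume
        rw [← h3]
        simpa [even_two.neg_pow] using h1
      have hsplit : (fun s : ℝ => Real.exp (-((n:ℝ)+1) * s ^ 2) * h s)
          = fun s : ℝ => Real.exp (-((n:ℝ)+1) * s ^ 2) * g s
              + Real.exp (-((n:ℝ)+1) * s ^ 2) * g (-s) := by
        funext s; simp only [hh]; ring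
      rw [hsplit, integral_add (integrable_exp_sq_mul' hn1 g hg M hM)
        (integrable_exp_sq_mul' hn1 (fun s => g (-s)) (hg.comp continuous_neg) M
          (fun x => hM (-x))), h1, h2, add_zero]
    exact key_even h hc (M + M) hbd heven hint t
  · intro hodd ε hε
    have h2 : ∀ s : ℝ, g (-s) = -g s := fun s => by have := hodd s; linarith
    have h3 := integral_neg_eq_self (fun s : ℝ => Real.exp (-s ^ 2 / ε) * g s) volume
    have h4 : ∫ s : ℝ, Real.exp (-s ^ 2 / ε) * g (-s)
        = ∫ s : ℝ, Real.exp (-s ^ 2 / ε) * g s := by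
      rw [← h3]
      congr 1
      funext s
      rw [even_two.neg_pow]
    have h5 : ∫ s : ℝ, Real.exp (-s ^ 2 / ε) * g (-s)
        = - ∫ s : ℝ, Real.exp (-s ^ 2 / ε) * g s := by
      simp_rw [h2, mul_neg]
      exact integral_neg _
    linarith [h4, h5]
end

section
/- Fix ε > 0 and let g : ℝ → ℝ be continuous and bounded. The differential equation ε·y' = 2x·y + ε·g(x) + ε·α admits a solution bounded on all of ℝ if and only if α = −(∫_{-∞}^{∞} e^{-t²/ε} g(t) dt)/(∫_{-∞}^{∞} e^{-t²/ε} dt), and in that case the bounded solution is unique and equals e^{x²/ε} ∫_{-∞}^x e^{-t²/ε} (g(t)+α) dt. -/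
open MeasureTheory Set Filter Topology

namespace CanardAux

variable {ε : ℝ}

lemma gauss_integrable (hε : 0 < ε) :
    Integrable (fun t : ℝ => Real.exp (-t ^ 2 / ε)) := by
  have h : (fun t : ℝ => Real.exp (-t ^ 2 / ε)) = fun t : ℝ => Real.exp (-(1 / ε) * t ^ 2) := by
    funext t; congr 1; field_simp
  rw [h]
  exact integrable_exp_neg_mul_sq (by positivity)

lemma gauss_pos (hε : 0 < ε) : 0 < ∫ t : ℝ, Real.exp (-t ^ 2 / ε) := by
  have h : (fun t : ℝ => Real.exp (-t ^ 2 / ε)) = fun t : ℝ => Real.exp (-(1 / ε) * t ^ 2) := by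
    funext t; congr 1; field_simp
  rw [h, integral_gaussian]
  have : (0:ℝ) < Real.pi / (1 / ε) := by positivity
  exact Real.sqrt_pos.2 this

lemma shift_integrable (hε : 0 < ε) (x : ℝ) :
    Integrable (fun t : ℝ => Real.exp (-(t - x) ^ 2 / ε)) :=
  (gauss_integrable hε).comp_sub_right x

lemma shift_integral (hε : 0 < ε) (x : ℝ) :
    (∫ t : ℝ, Real.exp (-(t - x) ^ 2 / ε)) = ∫ t : ℝ, Real.exp (-t ^ 2 / ε) :=
  integral_sub_right_eq_self (fun t : ℝ => Real.exp (-t ^ 2 / ε)) x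

lemma tail_left (hε : 0 < ε) {x : ℝ} (hx : x ≤ 0) :
    (∫ t in Iio x, Real.exp (-t ^ 2 / ε)) ≤
      Real.exp (-x ^ 2 / ε) * ∫ t : ℝ, Real.exp (-t ^ 2 / ε) := by
  calc (∫ t in Iio x, Real.exp (-t ^ 2 / ε))
      ≤ ∫ t in Iio x, Real.exp (-x ^ 2 / ε) * Real.exp (-(t - x) ^ 2 / ε) := by
        apply setIntegral_mono_on ((gauss_integrable hε).integrableOn)
          (((shift_integrable hε x).const_mul _).integrableOn) measurableSet_Iio
        intro t ht
        rw [← Real.exp_add]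
        apply Real.exp_le_exp.2
        rw [← add_div, div_le_div_iff_of_pos_right hε]
        have ht' : t ≤ x := le_of_lt ht
        nlinarith [mul_nonneg (neg_nonneg.2 hx) (sub_nonneg.2 ht')]
    _ = Real.exp (-x ^ 2 / ε) * ∫ t in Iio x, Real.exp (-(t - x) ^ 2 / ε) :=
        integral_const_mul _ _
    _ ≤ Real.exp (-x ^ 2 / ε) * ∫ t : ℝ, Real.exp (-(t - x) ^ 2 / ε) := by
        apply mul_le_mul_of_nonneg_left _ (Real.exp_pos _).le
        exact setIntegral_le_integral (shift_integrable hε x)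
          (Eventually.of_forall fun t => (Real.exp_pos _).le)
    _ = Real.exp (-x ^ 2 / ε) * ∫ t : ℝ, Real.exp (-t ^ 2 / ε) := by
        rw [shift_integral hε]

lemma tail_right (hε : 0 < ε) {x : ℝ} (hx : 0 ≤ x) :
    (∫ t in Ici x, Real.exp (-t ^ 2 / ε)) ≤
      Real.exp (-x ^ 2 / ε) * ∫ t : ℝ, Real.exp (-t ^ 2 / ε) := by
  calc (∫ t in Ici x, Real.exp (-t ^ 2 / ε))
      ≤ ∫ t in Ici x, Real.exp (-x ^ 2 / ε) * Real.exp (-(t - x) ^ 2 / ε) := by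
        apply setIntegral_mono_on ((gauss_integrable hε).integrableOn)
          (((shift_integrable hε x).const_mul _).integrableOn) measurableSet_Ici
        intro t ht
        rw [← Real.exp_add]
        apply Real.exp_le_exp.2
        rw [← add_div, div_le_div_iff_of_pos_right hε]
        have ht' : x ≤ t := ht
        nlinarith [mul_nonneg hx (sub_nonneg.2 ht')]
    _ = Real.exp (-x ^ 2 / ε) * ∫ t in Ici x, Real.exp (-(t - x) ^ 2 / ε) :=
        integral_const_mul _ _
    _ ≤ Real.exp (-x ^ 2 / ε) * ∫ t : ℝ, Real.exp (-(t - x) ^ 2 / ε) := by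
        apply mul_le_mul_of_nonneg_left _ (Real.exp_pos _).le
        exact setIntegral_le_integral (shift_integrable hε x)
          (Eventually.of_forall fun t => (Real.exp_pos _).le)
    _ = Real.exp (-x ^ 2 / ε) * ∫ t : ℝ, Real.exp (-t ^ 2 / ε) := by
        rw [shift_integral hε]

lemma abs_setIntegral_le {f : ℝ → ℝ} {C : ℝ} (hC : 0 ≤ C) (hfi : Integrable f)
    {s : Set ℝ} (hs : MeasurableSet s)
    (hb : ∀ t, |f t| ≤ C * Real.exp (-t ^ 2 / ε)) (hε : 0 < ε) :
    |∫ t in s, f t| ≤ C * ∫ t in s, Real.exp (-t ^ 2 / ε) := by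
  calc |∫ t in s, f t| ≤ ∫ t in s, |f t| := by
        simpa [Real.norm_eq_abs] using
          norm_integral_le_integral_norm (μ := volume.restrict s) f
    _ ≤ ∫ t in s, C * Real.exp (-t ^ 2 / ε) := by
        apply setIntegral_mono_on hfi.abs.integrableOn
          (((gauss_integrable hε).const_mul _).integrableOn) hs
        intro t _; exact hb t
    _ = C * ∫ t in s, Real.exp (-t ^ 2 / ε) := integral_const_mul _ _

lemma hasDerivAt_primitive {f : ℝ → ℝ} (hc : Continuous f) (hi : Integrable f) (x : ℝ) :
    HasDerivAt (fun u => ∫ t in Iio u, f t) (f x) x := by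
  have key : ∀ u : ℝ, (∫ t in Iio u, f t) =
      (∫ t in (0:ℝ)..u, f t) + ∫ t in Iio (0:ℝ), f t := by
    intro u
    have h1 : (∫ t in Iio u, f t) = ∫ t in Iic u, f t :=
      setIntegral_congr_set Iio_ae_eq_Iic
    have h2 : (∫ t in Iio (0:ℝ), f t) = ∫ t in Iic (0:ℝ), f t :=
      setIntegral_congr_set Iio_ae_eq_Iic
    have h3 := intervalIntegral.integral_Iic_sub_Iic (hi.integrableOn (s := Iic (0:ℝ)))
      (hi.integrableOn (s := Iic u))
    rw [h1, h2]; linarith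
  have hd : HasDerivAt (fun u => ∫ t in (0:ℝ)..u, f t) (f x) x :=
    intervalIntegral.integral_hasDerivAt_right (hc.intervalIntegrable _ _)
      hc.stronglyMeasurable.stronglyMeasurableAtFilter hc.continuousAt
  have h4 := hd.add_const (∫ t in Iio (0:ℝ), f t)
  rwa [show (fun u => (∫ t in (0:ℝ)..u, f t) + ∫ t in Iio (0:ℝ), f t)
      = fun u => ∫ t in Iio u, f t from funext fun u => (key u).symm] at h4

lemma eq_zero_of_le_gauss (hε : 0 < ε) {c K : ℝ}
    (h : ∀ x : ℝ, x ≤ 0 → |c| ≤ K * Real.exp (-x ^ 2 / ε)) : c = 0 := by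
  have h2 : ∀ n : ℕ, |c| ≤ K * Real.exp (-(n : ℝ) ^ 2 / ε) := by
    intro n
    have := h (-(n : ℝ)) (neg_nonpos.2 n.cast_nonneg)
    simpa [neg_pow] using this
  have ht : Tendsto (fun n : ℕ => K * Real.exp (-(n : ℝ) ^ 2 / ε)) atTop (nhds (K * 0)) := by
    apply Tendsto.const_mul
    apply Real.tendsto_exp_atBot.comp
    have h3 : Tendsto (fun n : ℕ => ((n : ℝ)) ^ 2 / ε) atTop atTop :=
      Tendsto.atTop_div_const hε
        ((tendsto_pow_atTop two_ne_zero).comp tendsto_natCast_atTop_atTop)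
    have h4 := tendsto_neg_atBot_iff.mpr h3
    simpa [neg_div] using h4
  have h5 : |c| ≤ K * 0 := ge_of_tendsto ht (Eventually.of_forall h2)
  rw [mul_zero] at h5
  exact abs_eq_zero.1 (le_antisymm h5 (abs_nonneg c))

lemma exp_cancel (hε : 0 < ε) (x : ℝ) :
    Real.exp (x ^ 2 / ε) * Real.exp (-x ^ 2 / ε) = 1 := by
  rw [← Real.exp_add, show x ^ 2 / ε + -x ^ 2 / ε = 0 by ring, Real.exp_zero]

end CanardAux

open CanardAux

/-- For fixed `ε > 0` and `g` continuous and bounded, the equation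
`ε y' = 2xy + εg(x) + εα` has a solution bounded on all of `ℝ` iff
`α = -(∫ e^{-t²/ε} g)/(∫ e^{-t²/ε})`, and in that case the bounded solution is
unique and equals `e^{x²/ε} ∫_{-∞}^x e^{-t²/ε}(g(t)+α) dt`. -/
theorem canard_value_unique (ε : ℝ) (hε : 0 < ε) (g : ℝ → ℝ) (hg : Continuous g)
    (M : ℝ) (hM : ∀ x, |g x| ≤ M) (α : ℝ) :
    ((∃ y : ℝ → ℝ, (∀ x, HasDerivAt y ((2 * x * y x + ε * (g x + α)) / ε) x) ∧
        ∃ B, ∀ x, |y x| ≤ B) ↔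
      α = -(∫ t : ℝ, Real.exp (-t ^ 2 / ε) * g t) / (∫ t : ℝ, Real.exp (-t ^ 2 / ε))) ∧
    (α = -(∫ t : ℝ, Real.exp (-t ^ 2 / ε) * g t) / (∫ t : ℝ, Real.exp (-t ^ 2 / ε)) →
      ∀ y : ℝ → ℝ, (∀ x, HasDerivAt y ((2 * x * y x + ε * (g x + α)) / ε) x) →
        (∃ B, ∀ x, |y x| ≤ B) →
        ∀ x, y x = Real.exp (x ^ 2 / ε) *
          ∫ t in Set.Iio x, Real.exp (-t ^ 2 / ε) * (g t + α)) := by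
  have hM0 : 0 ≤ M := (abs_nonneg _).trans (hM 0)
  set C : ℝ := M + |α| with hC_def
  have hC0 : 0 ≤ C := by positivity
  set G : ℝ := ∫ t : ℝ, Real.exp (-t ^ 2 / ε) with hG_def
  have hG : 0 < G := gauss_pos hε
  set f : ℝ → ℝ := fun t => Real.exp (-t ^ 2 / ε) * (g t + α) with hf_def
  have hfc : Continuous f := by
    apply Continuous.mul _ (hg.add continuous_const)
    exact Real.continuous_exp.comp (by continuity)
  have hfb : ∀ t, |f t| ≤ C * Real.exp (-t ^ 2 / ε) := by
    intro t
    rw [hf_def]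
    simp only [abs_mul, Real.abs_exp]
    rw [mul_comm C _]
    apply mul_le_mul_of_nonneg_left _ (Real.exp_pos _).le
    calc |g t + α| ≤ |g t| + |α| := abs_add_le _ _
      _ ≤ M + |α| := by linarith [hM t]
  have hfi : Integrable f := by
    have h := (gauss_integrable hε).bdd_mul (c := M + |α|) (hg.add continuous_const).aestronglyMeasurable
      (Eventually.of_forall fun t => by
        simp only [Real.norm_eq_abs]
        calc |g t + α| ≤ |g t| + |α| := abs_add_le _ _
          _ ≤ M + |α| := by linarith [hM t])
    simpa [hf_def, mul_comm] using h
  set F : ℝ → ℝ := fun u => ∫ t in Iio u, f t with hF_def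
  have hF : ∀ x, HasDerivAt F (f x) x := hasDerivAt_primitive hfc hfi
  -- bound on F for x ≤ 0
  have hFb : ∀ x : ℝ, x ≤ 0 → |F x| ≤ C * G * Real.exp (-x ^ 2 / ε) := by
    intro x hx
    calc |F x| ≤ C * ∫ t in Iio x, Real.exp (-t ^ 2 / ε) :=
          abs_setIntegral_le hC0 hfi measurableSet_Iio hfb hε
      _ ≤ C * (Real.exp (-x ^ 2 / ε) * G) :=
          mul_le_mul_of_nonneg_left (tail_left hε hx) hC0
      _ = C * G * Real.exp (-x ^ 2 / ε) := by ring
  -- splitting of total integral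
  have hsplit : ∀ x : ℝ, F x + (∫ t in Ici x, f t) = ∫ t : ℝ, f t := by
    intro x
    have h := integral_add_compl (measurableSet_Iio (a := x)) hfi
    rwa [compl_Iio] at h
  have hIcib : ∀ x : ℝ, 0 ≤ x → |∫ t in Ici x, f t| ≤ C * G * Real.exp (-x ^ 2 / ε) := by
    intro x hx
    calc |∫ t in Ici x, f t| ≤ C * ∫ t in Ici x, Real.exp (-t ^ 2 / ε) :=
          abs_setIntegral_le hC0 hfi measurableSet_Ici hfb hε
      _ ≤ C * (Real.exp (-x ^ 2 / ε) * G) :=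
          mul_le_mul_of_nonneg_left (tail_right hε hx) hC0
      _ = C * G * Real.exp (-x ^ 2 / ε) := by ring
  -- representation of any bounded solution
  have rep : ∀ y : ℝ → ℝ, (∀ x, HasDerivAt y ((2 * x * y x + ε * (g x + α)) / ε) x) →
      (∃ B, ∀ x, |y x| ≤ B) → ∀ x, y x = Real.exp (x ^ 2 / ε) * F x := by
    rintro y hy ⟨B, hB⟩
    have hB0 : 0 ≤ B := (abs_nonneg _).trans (hB 0)
    have hφ : ∀ x, HasDerivAt (fun u => Real.exp (-u ^ 2 / ε) * y u) (f x) x := by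
      intro x
      have h1 : HasDerivAt (fun u : ℝ => -u ^ 2 / ε) (-(2 * x) / ε) x := by
        have := ((hasDerivAt_pow 2 x).neg).div_const ε
        simpa using this
      have h2 := h1.exp.mul (hy x)
      refine h2.congr_deriv ?_
      rw [hf_def]
      field_simp
      ring
    have hconst : ∀ x, Real.exp (-x ^ 2 / ε) * y x - F x
        = Real.exp (-(0:ℝ) ^ 2 / ε) * y 0 - F 0 := by
      intro x
      have hdiff : Differentiable ℝ (fun u => Real.exp (-u ^ 2 / ε) * y u - F u) :=
        fun u => ((hφ u).sub (hF u)).differentiableAt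
      have hderiv : ∀ u, deriv (fun u => Real.exp (-u ^ 2 / ε) * y u - F u) u = 0 := by
        intro u
        rw [HasDerivAt.deriv (f := fun u => Real.exp (-u ^ 2 / ε) * y u - F u) ((hφ u).sub (hF u))]
        exact sub_self _
      exact is_const_of_deriv_eq_zero hdiff hderiv x 0
    have hc0 : Real.exp (-(0:ℝ) ^ 2 / ε) * y 0 - F 0 = 0 := by
      apply eq_zero_of_le_gauss hε (K := B + C * G)
      intro x hx
      calc |Real.exp (-(0:ℝ) ^ 2 / ε) * y 0 - F 0|
          = |Real.exp (-x ^ 2 / ε) * y x - F x| := by rw [hconst x]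
        _ ≤ |Real.exp (-x ^ 2 / ε) * y x| + |F x| := abs_sub _ _
        _ ≤ Real.exp (-x ^ 2 / ε) * B + C * G * Real.exp (-x ^ 2 / ε) := by
            apply add_le_add _ (hFb x hx)
            rw [abs_mul, Real.abs_exp]
            exact mul_le_mul_of_nonneg_left (hB x) (Real.exp_pos _).le
        _ = (B + C * G) * Real.exp (-x ^ 2 / ε) := by ring
    intro x
    have h5 : Real.exp (-x ^ 2 / ε) * y x = F x := by
      have := hconst x
      rw [hc0] at this
      linarith [sub_eq_zero.mp this]
    rw [← h5, ← mul_assoc, exp_cancel hε, one_mul]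
  constructor
  · constructor
    · rintro ⟨y, hy, B, hB⟩
      have hB0 : 0 ≤ B := (abs_nonneg _).trans (hB 0)
      have hrep := rep y hy ⟨B, hB⟩
      have hFx : ∀ x, F x = Real.exp (-x ^ 2 / ε) * y x := by
        intro x
        rw [hrep x, ← mul_assoc, mul_comm (Real.exp (-x ^ 2 / ε)), exp_cancel hε, one_mul]
      have hI : (∫ t : ℝ, f t) = 0 := by
        apply eq_zero_of_le_gauss hε (K := B + C * G)
        intro x hx
        have hx' : 0 ≤ -x := by linarith
        have h1 := hsplit (-x)
        calc |∫ t : ℝ, f t| = |F (-x) + ∫ t in Ici (-x), f t| := by rw [h1]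
          _ ≤ |F (-x)| + |∫ t in Ici (-x), f t| := abs_add_le _ _
          _ ≤ Real.exp (-(-x) ^ 2 / ε) * B + C * G * Real.exp (-(-x) ^ 2 / ε) := by
              apply add_le_add _ (hIcib (-x) hx')
              rw [hFx (-x), abs_mul, Real.abs_exp]
              exact mul_le_mul_of_nonneg_left (hB (-x)) (Real.exp_pos _).le
          _ = (B + C * G) * Real.exp (-x ^ 2 / ε) := by rw [neg_pow]; ring_nf
      -- split I into two integrals
      have hIsplit : (∫ t : ℝ, f t)
          = (∫ t : ℝ, Real.exp (-t ^ 2 / ε) * g t) + α * G := by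
        have h1 : Integrable (fun t : ℝ => Real.exp (-t ^ 2 / ε) * g t) := by
          have h := (gauss_integrable hε).bdd_mul (c := M) hg.aestronglyMeasurable
            (Eventually.of_forall fun t => by simpa [Real.norm_eq_abs] using hM t)
          simpa [mul_comm] using h
        have h2 : Integrable (fun t : ℝ => Real.exp (-t ^ 2 / ε) * α) :=
          (gauss_integrable hε).mul_const α
        calc (∫ t : ℝ, f t)
            = ∫ t : ℝ, (Real.exp (-t ^ 2 / ε) * g t + Real.exp (-t ^ 2 / ε) * α) := by
              rw [hf_def]; congr 1; funext t; ring
          _ = (∫ t : ℝ, Real.exp (-t ^ 2 / ε) * g t)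
              + ∫ t : ℝ, Real.exp (-t ^ 2 / ε) * α := integral_add h1 h2
          _ = (∫ t : ℝ, Real.exp (-t ^ 2 / ε) * g t) + α * G := by
              rw [integral_mul_const, hG_def]; ring
      rw [hIsplit] at hI
      rw [eq_div_iff hG.ne']
      linarith
    · -- backward direction: construct the bounded solution
      intro hα
      have hI : (∫ t : ℝ, f t) = 0 := by
        have h1 : Integrable (fun t : ℝ => Real.exp (-t ^ 2 / ε) * g t) := by
          have h := (gauss_integrable hε).bdd_mul (c := M) hg.aestronglyMeasurable
            (Eventually.of_forall fun t => by simpa [Real.norm_eq_abs] using hM t)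
          simpa [mul_comm] using h
        have h2 : Integrable (fun t : ℝ => Real.exp (-t ^ 2 / ε) * α) :=
          (gauss_integrable hε).mul_const α
        have hα' : α * G = -(∫ t : ℝ, Real.exp (-t ^ 2 / ε) * g t) := by
          rw [hα]; field_simp
        calc (∫ t : ℝ, f t)
            = ∫ t : ℝ, (Real.exp (-t ^ 2 / ε) * g t + Real.exp (-t ^ 2 / ε) * α) := by
              rw [hf_def]; congr 1; funext t; ring
          _ = (∫ t : ℝ, Real.exp (-t ^ 2 / ε) * g t)
              + ∫ t : ℝ, Real.exp (-t ^ 2 / ε) * α := integral_add h1 h2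
          _ = (∫ t : ℝ, Real.exp (-t ^ 2 / ε) * g t) + α * G := by
              rw [integral_mul_const, hG_def]; ring
          _ = 0 := by rw [hα']; ring
      refine ⟨fun x => Real.exp (x ^ 2 / ε) * F x, ?_, ⟨C * G, ?_⟩⟩
      · intro x
        have h1 : HasDerivAt (fun u : ℝ => u ^ 2 / ε) (2 * x / ε) x := by
          have := (hasDerivAt_pow 2 x).div_const ε
          simpa using this
        have h2 := h1.exp.mul (hF x)
        refine h2.congr_deriv ?_
        rw [hf_def]
        rw [show Real.exp (x ^ 2 / ε) * (2 * x / ε) * F x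
            + Real.exp (x ^ 2 / ε) * (Real.exp (-x ^ 2 / ε) * (g x + α))
            = Real.exp (x ^ 2 / ε) * (2 * x / ε) * F x
            + (Real.exp (x ^ 2 / ε) * Real.exp (-x ^ 2 / ε)) * (g x + α) by ring,
          exp_cancel hε, one_mul]
        field_simp
      · intro x
        rcases le_total x 0 with hx | hx
        · rw [abs_mul, Real.abs_exp]
          calc Real.exp (x ^ 2 / ε) * |F x|
              ≤ Real.exp (x ^ 2 / ε) * (C * G * Real.exp (-x ^ 2 / ε)) :=
                mul_le_mul_of_nonneg_left (hFb x hx) (Real.exp_pos _).le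
            _ = C * G * (Real.exp (x ^ 2 / ε) * Real.exp (-x ^ 2 / ε)) := by ring
            _ = C * G := by rw [exp_cancel hε, mul_one]
        · have hFx : F x = -(∫ t in Ici x, f t) := by
            have := hsplit x
            rw [hI] at this
            linarith
          rw [abs_mul, Real.abs_exp, hFx, abs_neg]
          calc Real.exp (x ^ 2 / ε) * |∫ t in Ici x, f t|
              ≤ Real.exp (x ^ 2 / ε) * (C * G * Real.exp (-x ^ 2 / ε)) :=
                mul_le_mul_of_nonneg_left (hIcib x hx) (Real.exp_pos _).le
            _ = C * G * (Real.exp (x ^ 2 / ε) * Real.exp (-x ^ 2 / ε)) := by ring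
            _ = C * G := by rw [exp_cancel hε, mul_one]
  · intro _ y hy hB x
    exact rep y hy hB x
end

section
/- Let r > 0, let a : [0, r] → ℂ be continuous, and let g : (0, ∞) → ℂ satisfy g(X) → 0 as X → ∞. If sup_{0 < x ≤ r} |a(x) + g(x/ε)| → 0 as ε → 0⁺, then a(x) = 0 for all x ∈ [0, r] and g(X) = 0 for all X > 0. -/
/-- Uniqueness of composite expansions: if `a` is continuous on `[0,r]`,
`g(X) → 0` as `X → ∞`, and `sup_{0<x≤r} ‖a(x) + g(x/ε)‖ → 0` as `ε → 0⁺`,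
then `a ≡ 0` on `[0,r]` and `g ≡ 0` on `(0,∞)`. -/
theorem composite_decomposition_unique (r : ℝ) (hr : 0 < r)
    (a : ℝ → ℂ) (ha : ContinuousOn a (Set.Icc 0 r))
    (g : ℝ → ℂ) (hg : Filter.Tendsto g Filter.atTop (nhds 0))
    (h : ∀ δ : ℝ, 0 < δ → ∃ ε₁ : ℝ, 0 < ε₁ ∧ ∀ ε : ℝ, 0 < ε → ε < ε₁ →
      ∀ x ∈ Set.Ioc (0 : ℝ) r, ‖a x + g (x / ε)‖ ≤ δ) :
    (∀ x ∈ Set.Icc (0 : ℝ) r, a x = 0) ∧ ∀ X : ℝ, 0 < X → g X = 0 := by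
  -- Step 1: a vanishes on (0, r].
  have haIoc : ∀ x ∈ Set.Ioc (0 : ℝ) r, a x = 0 := by
    intro x hx
    have : ∀ δ : ℝ, 0 < δ → ‖a x‖ ≤ 2 * δ := by
      intro δ hδ
      obtain ⟨ε₁, hε₁, H⟩ := h δ hδ
      -- choose M such that ∀ X ≥ M, ‖g X‖ ≤ δ
      have : ∀ᶠ X in Filter.atTop, ‖g X‖ ≤ δ := by
        have h' := hg.norm
        rw [norm_zero] at h'
        exact h'.eventually_le_const hδ
      obtain ⟨M, hM⟩ := this.exists_forall_of_atTop
      -- choose ε with 0 < ε < ε₁ and x/ε ≥ M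
      set ε := min (ε₁ / 2) (x / (|M| + 1)) with hεdef
      have hMpos : (0:ℝ) < |M| + 1 := by positivity
      have hεpos : 0 < ε := lt_min (by linarith) (div_pos hx.1 hMpos)
      have hεlt : ε < ε₁ := lt_of_le_of_lt (min_le_left _ _) (by linarith)
      have hxε : x / ε ≥ M := by
        have h2 : ε ≤ x / (|M| + 1) := min_le_right _ _
        have : |M| + 1 ≤ x / ε := by
          rw [le_div_iff₀ hεpos]
          calc (|M| + 1) * ε ≤ (|M| + 1) * (x / (|M| + 1)) := by
                exact mul_le_mul_of_nonneg_left h2 (le_of_lt hMpos)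
            _ = x := by field_simp
        calc M ≤ |M| := le_abs_self M
          _ ≤ |M| + 1 := by linarith
          _ ≤ x / ε := this
      have h1 : ‖a x + g (x / ε)‖ ≤ δ := H ε hεpos hεlt x hx
      have h2 : ‖g (x / ε)‖ ≤ δ := hM _ hxε
      calc ‖a x‖ = ‖(a x + g (x / ε)) - g (x / ε)‖ := by ring_nf
        _ ≤ ‖a x + g (x / ε)‖ + ‖g (x / ε)‖ := norm_sub_le _ _
        _ ≤ 2 * δ := by linarith
    have hnorm : ‖a x‖ ≤ 0 := by
      by_contra hc
      push_neg at hc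
      have := this (‖a x‖ / 4) (by linarith)
      linarith
    simpa using le_antisymm hnorm (norm_nonneg _)
  -- Step 2: a 0 = 0 by continuity.
  have ha0 : a 0 = 0 := by
    have hcont : Filter.Tendsto a (nhdsWithin 0 (Set.Icc 0 r)) (nhds (a 0)) :=
      ha 0 ⟨le_refl _, hr.le⟩
    have heq : Filter.Tendsto a (nhdsWithin 0 (Set.Ioc 0 r)) (nhds (a 0)) :=
      hcont.mono_left (nhdsWithin_mono _ Set.Ioc_subset_Icc_self)
    have hzero : Filter.Tendsto a (nhdsWithin 0 (Set.Ioc 0 r)) (nhds 0) := by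
      have : ∀ᶠ x in nhdsWithin 0 (Set.Ioc 0 r), a x = 0 :=
        eventually_nhdsWithin_of_forall haIoc
      exact Filter.Tendsto.congr' (Filter.EventuallyEq.symm this) tendsto_const_nhds
    have hne : (nhdsWithin (0:ℝ) (Set.Ioc 0 r)).NeBot :=
      mem_closure_iff_nhdsWithin_neBot.mp
        (by rw [closure_Ioc hr.ne]; exact ⟨le_refl _, hr.le⟩)
    exact tendsto_nhds_unique heq hzero
  refine ⟨?_, ?_⟩
  · intro x hx
    rcases eq_or_lt_of_le hx.1 with h0 | h0
    · rw [← h0]; exact ha0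
    · exact haIoc x ⟨h0, hx.2⟩
  · intro X hX
    have : ∀ δ : ℝ, 0 < δ → ‖g X‖ ≤ δ := by
      intro δ hδ
      obtain ⟨ε₁, hε₁, H⟩ := h δ hδ
      set ε := min (ε₁ / 2) (r / X) with hεdef
      have hεpos : 0 < ε := lt_min (by linarith) (div_pos hr hX)
      have hεlt : ε < ε₁ := lt_of_le_of_lt (min_le_left _ _) (by linarith)
      have hxmem : ε * X ∈ Set.Ioc (0:ℝ) r := by
        constructor
        · positivity
        · have : ε ≤ r / X := min_le_right _ _
          calc ε * X ≤ (r / X) * X := mul_le_mul_of_nonneg_right this hX.le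
            _ = r := by field_simp
      have := H ε hεpos hεlt (ε * X) hxmem
      rw [haIoc _ hxmem] at this
      have hdiv : ε * X / ε = X := by field_simp
      rw [hdiv] at this
      simpa using this
    have hnorm : ‖g X‖ ≤ 0 := by
      by_contra hc
      push_neg at hc
      have := this (‖g X‖ / 2) (by linarith)
      linarith
    simpa using le_antisymm hnorm (norm_nonneg _)
end

section
/- Let p ≥ 2 be an integer, α > 0 a real number, and D a nonnegative integer with D ≡ 0 or D ≡ 1 (mod p). Then the differential equation Z''(X) − α·X^{p−1}·Z'(X) + α·D·X^{p−2}·Z(X) = 0 admits a monic polynomial solution of degree exactly D. -/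
open Polynomial Finset

noncomputable def rieAux (α : ℝ) (D p : ℕ) : ℕ → ℝ
  | 0 => 1
  | k+1 => -(((D:ℝ) - k*p) * ((D:ℝ) - k*p - 1)) * rieAux α D p k / (α * (k+1) * p)

/-- For `p ≥ 2`, `α > 0` and `D` a nonnegative integer congruent to `0` or `1`
mod `p`, the equation `Z'' - α X^{p-1} Z' + α D X^{p-2} Z = 0` has a monic
polynomial solution of degree exactly `D`. -/
theorem reduced_inner_equation_polynomial_solution (p : ℕ) (hp : 2 ≤ p)
    (α : ℝ) (hα : 0 < α) (D : ℕ) (hD : D % p = 0 ∨ D % p = 1) :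
    ∃ Z : Polynomial ℝ, Z.Monic ∧ Z.natDegree = D ∧
      ∀ X : ℝ, (Polynomial.derivative (Polynomial.derivative Z)).eval X
        - α * X ^ (p - 1) * (Polynomial.derivative Z).eval X
        + α * D * X ^ (p - 2) * Z.eval X = 0 := by
  classical
  have hp0 : 0 < p := by omega
  set K := D / p with hK
  set a : ℕ → ℝ := rieAux α D p with ha
  set n : ℕ → ℕ := fun k => D - k * p with hn
  set Z : Polynomial ℝ := ∑ k ∈ Finset.range (K+1), C (a k) * X ^ (n k) with hZdef
  have hdm : p * (D / p) + D % p = D := Nat.div_add_mod D p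
  have hle : ∀ k ≤ K, k * p ≤ D := by
    intro k hk
    calc k * p ≤ K * p := Nat.mul_le_mul_right p hk
    _ = (D / p) * p := by rw [hK]
    _ ≤ D := Nat.div_mul_le_self D p
  have hcast : ∀ k ≤ K, ((n k : ℕ) : ℝ) = (D : ℝ) - k * p := by
    intro k hk
    have := hle k hk
    simp only [hn]
    push_cast [Nat.cast_sub this]
    ring
  -- coefficient at D
  have hcoeffD : Z.coeff D = 1 := by
    rw [hZdef, Polynomial.finset_sum_coeff]
    rw [Finset.sum_eq_single 0]
    · simp [hn, ha, rieAux, coeff_C_mul, coeff_X_pow]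
    · intro k hk hk0
      have hk' : k ≤ K := by
        simp only [Finset.mem_range] at hk; omega
      have h1 : k * p ≤ D := hle k hk'
      have h2 : p ≤ k * p := by
        have : 1 ≤ k := by omega
        calc p = 1 * p := (one_mul p).symm
        _ ≤ k * p := Nat.mul_le_mul_right p this
      have : n k ≠ D := by simp only [hn]; omega
      simp [coeff_C_mul, coeff_X_pow, this, Ne.symm this]
    · intro h
      simp at h
  have hdegle : Z.natDegree ≤ D := by
    rw [hZdef]
    refine Polynomial.natDegree_sum_le_of_forall_le _ _ ?_
    intro k hk
    refine le_trans (Polynomial.natDegree_C_mul_X_pow_le _ _) ?_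
    simp only [hn]; omega
  have hdeg : Z.natDegree = D := by
    refine le_antisymm hdegle ?_
    exact Polynomial.le_natDegree_of_ne_zero (by rw [hcoeffD]; norm_num)
  have hmonic : Z.Monic := by
    unfold Polynomial.Monic Polynomial.leadingCoeff
    rw [hdeg, hcoeffD]
  refine ⟨Z, hmonic, hdeg, ?_⟩
  -- nonvanishing of denominators
  have hαne : α ≠ 0 := hα.ne'
  have hpne : (p : ℝ) ≠ 0 := by positivity
  -- the recursion
  have hrec : ∀ k : ℕ, α * ((k+1) * p) * a (k+1)
      = -(((D:ℝ) - k*p) * ((D:ℝ) - k*p - 1)) * a k := by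
    intro k
    have hk1 : ((k:ℝ) + 1) ≠ 0 := by positivity
    have : a (k+1) = -(((D:ℝ) - k*p) * ((D:ℝ) - k*p - 1)) * a k / (α * (k+1) * p) := by
      rw [ha]; rfl
    rw [this]
    field_simp
  intro Xv
  -- evaluations
  have e0 : Z.eval Xv = ∑ k ∈ Finset.range (K+1), a k * Xv ^ (n k) := by
    rw [hZdef, Polynomial.eval_finset_sum]
    simp
  have hd1 : Polynomial.derivative Z
      = ∑ k ∈ Finset.range (K+1), C (a k * (n k : ℝ)) * X ^ (n k - 1) := by
    rw [hZdef, map_sum]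
    refine Finset.sum_congr rfl fun k _ => ?_
    rw [Polynomial.derivative_C_mul, Polynomial.derivative_X_pow, ← mul_assoc, ← C_mul]
  have e1 : (Polynomial.derivative Z).eval Xv
      = ∑ k ∈ Finset.range (K+1), a k * (n k : ℝ) * Xv ^ (n k - 1) := by
    rw [hd1, Polynomial.eval_finset_sum]
    simp
  have hd2 : Polynomial.derivative (Polynomial.derivative Z)
      = ∑ k ∈ Finset.range (K+1), C (a k * (n k : ℝ) * ((n k - 1 : ℕ) : ℝ)) * X ^ (n k - 2) := by
    rw [hd1, map_sum]
    refine Finset.sum_congr rfl fun k _ => ?_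
    have hh : n k - 1 - 1 = n k - 2 := by omega
    rw [Polynomial.derivative_C_mul, Polynomial.derivative_X_pow, ← mul_assoc, ← C_mul, hh]
  have e2 : (Polynomial.derivative (Polynomial.derivative Z)).eval Xv
      = ∑ k ∈ Finset.range (K+1), a k * (n k : ℝ) * ((n k - 1 : ℕ) : ℝ) * Xv ^ (n k - 2) := by
    rw [hd2, Polynomial.eval_finset_sum]
    simp
  rw [e0, e1, e2, Finset.mul_sum, Finset.mul_sum, ← Finset.sum_sub_distrib,
    ← Finset.sum_add_distrib]
  -- name the three pieces
  set A : ℕ → ℝ := fun k => a k * (n k : ℝ) * ((n k - 1 : ℕ) : ℝ) * Xv ^ (n k - 2) with hA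
  set M : ℕ → ℝ := fun k => α * Xv ^ (p - 1) * (a k * (n k : ℝ) * Xv ^ (n k - 1)) with hM
  set L : ℕ → ℝ := fun k => α * (D : ℝ) * Xv ^ (p - 2) * (a k * Xv ^ (n k)) with hL
  have key : ∀ k < K, -(M (k+1)) + L (k+1) = -(A k) := by
    intro k hk
    have hk1 : k + 1 ≤ K := by omega
    have hk0 : k ≤ K := by omega
    have h1 : (k+1) * p ≤ D := hle _ hk1
    have h2 : k * p ≤ D := hle _ hk0
    have hnk : n k = n (k+1) + p := by
      have h3 : (k+1) * p = k * p + p := by ring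
      show D - k * p = D - (k+1) * p + p
      omega
    have hnkge : p ≤ n k := by omega
    have hcast1 : ((n (k+1) : ℕ) : ℝ) = (D : ℝ) - ((k:ℝ)+1) * p := by
      rw [hcast _ hk1]; push_cast; ring
    have hcast0 : ((n k : ℕ) : ℝ) = (D : ℝ) - k * p := hcast _ hk0
    have hcast0' : ((n k - 1 : ℕ) : ℝ) = ((D : ℝ) - k * p) - 1 := by
      rw [Nat.cast_sub (by omega)]
      push_cast [hcast0]
      ring
    have hrk := hrec k
    by_cases h0 : n (k+1) = 0
    · -- bottom term with zero exponent
      have hD' : (D : ℝ) = ((k:ℝ)+1) * p := by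
        have h := hcast1
        rw [h0] at h
        push_cast at h
        linarith
      have hexp : n k - 2 = p - 2 := by omega
      have hrk' := hrk
      rw [hD'] at hrk'
      calc -(M (k+1)) + L (k+1) = α * (D:ℝ) * Xv ^ (p-2) * a (k+1) := by
            simp only [hM, hL, h0, Nat.cast_zero, Nat.zero_sub, pow_zero]
            ring
        _ = -(A k) := by
            simp only [hA]
            rw [hcast0, hcast0', hexp, hD']
            linear_combination Xv ^ (p-2) * hrk'
    · -- generic term
      have h1' : 1 ≤ n (k+1) := by omega
      have hex1 : p - 1 + (n (k+1) - 1) = n k - 2 := by omega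
      have hex2 : p - 2 + n (k+1) = n k - 2 := by omega
      have r1 : Xv ^ (p-1) * Xv ^ (n (k+1) - 1) = Xv ^ (n k - 2) := by
        rw [← pow_add, hex1]
      have r2 : Xv ^ (p-2) * Xv ^ (n (k+1)) = Xv ^ (n k - 2) := by
        rw [← pow_add, hex2]
      calc -(M (k+1)) + L (k+1)
          = α * ((D : ℝ) - (n (k+1) : ℝ)) * a (k+1) * Xv ^ (n k - 2) := by
            simp only [hM, hL]
            linear_combination (α * (D:ℝ) * a (k+1)) * r2
              - (α * ((n (k+1) : ℕ) : ℝ) * a (k+1)) * r1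
        _ = -(A k) := by
            simp only [hA]
            rw [hcast1, hcast0, hcast0']
            linear_combination Xv ^ (n k - 2) * hrk
  have hB0 : -(M 0) + L 0 = 0 := by
    have hn0 : n 0 = D := by simp [hn]
    simp only [hM, hL, hn0]
    by_cases hD0 : D = 0
    · simp [hD0]
    · have h1 : 1 ≤ D := by omega
      have hr : Xv ^ (p-1) * Xv ^ (D-1) = Xv ^ (p-2) * Xv ^ D := by
        rw [← pow_add, ← pow_add]
        congr 1
        omega
      linear_combination (-(α * (D:ℝ) * a 0)) * hr
  have hAK : A K = 0 := by
    have hnK : n K = D % p := by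
      have h2 : p * K + D % p = D := by rw [hK]; exact Nat.div_add_mod D p
      have h3 : K * p = p * K := Nat.mul_comm _ _
      show D - K * p = D % p
      omega
    simp only [hA, hnK]
    rcases hD with h | h <;> simp [h]
  calc ∑ k ∈ Finset.range (K+1),
        (a k * (n k : ℝ) * ((n k - 1 : ℕ) : ℝ) * Xv ^ (n k - 2)
          - α * Xv ^ (p - 1) * (a k * (n k : ℝ) * Xv ^ (n k - 1))
          + α * (D:ℝ) * Xv ^ (p - 2) * (a k * Xv ^ (n k)))
      = ∑ k ∈ Finset.range (K+1), (A k + (-(M k) + L k)) := by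
        refine Finset.sum_congr rfl fun k _ => ?_
        simp only [hA, hM, hL]
        ring
    _ = (∑ k ∈ Finset.range (K+1), A k)
        + ∑ k ∈ Finset.range (K+1), (-(M k) + L k) := Finset.sum_add_distrib
    _ = (∑ k ∈ Finset.range K, A k) + A K
        + ((∑ k ∈ Finset.range K, (-(M (k+1)) + L (k+1))) + (-(M 0) + L 0)) := by
        rw [Finset.sum_range_succ, Finset.sum_range_succ']
    _ = (∑ k ∈ Finset.range K, A k) + ((∑ k ∈ Finset.range K, -(A k))) := by
        rw [hAK, hB0]
        rw [Finset.sum_congr rfl fun k hk => key k (Finset.mem_range.mp hk)]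
        ring
    _ = 0 := by rw [← Finset.sum_add_distrib]; simp
end

section
/- Let p ≥ 2 be an integer and l an integer with 0 ≤ l ≤ p−2. Define Y(X) = e^{X^p} ∫_X^∞ t^l·e^{-t^p} dt for X > 0. Then Y satisfies the differential equation Y'(X) = p·X^{p−1}·Y(X) − X^l, and for every X > 0 one has |Y(X) − X^{l+1−p}/p| ≤ ((p−l−1)/p²)·X^{l+1−2p}. -/
open MeasureTheory Set Filter

section Aux
variable {p : ℕ}

lemma aux_antideriv (hp : p ≠ 0) (t : ℝ) :
    HasDerivAt (fun t : ℝ => -Real.exp (-t ^ p) / p) (t ^ (p - 1) * Real.exp (-t ^ p)) t := by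
  have h1 : HasDerivAt (fun t : ℝ => -t ^ p) (-((p : ℝ) * t ^ (p - 1))) t :=
    (hasDerivAt_pow p t).neg
  have h2 := (h1.exp).neg.div_const (p : ℝ)
  refine h2.congr_deriv ?_
  have hp' : (p : ℝ) ≠ 0 := Nat.cast_ne_zero.mpr hp
  rw [div_eq_iff hp']
  ring

lemma aux_tendsto_exp (hp : p ≠ 0) :
    Tendsto (fun t : ℝ => Real.exp (-t ^ p)) atTop (nhds 0) := by
  have h1 : Tendsto (fun t : ℝ => t ^ p) atTop atTop :=
    tendsto_pow_atTop hp
  exact Real.tendsto_exp_neg_atTop_nhds_zero.comp h1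

lemma aux_base_integrable (hp : p ≠ 0) {X : ℝ} (hX : 0 < X) :
    IntegrableOn (fun t : ℝ => t ^ (p - 1) * Real.exp (-t ^ p)) (Ioi X) := by
  refine integrableOn_Ioi_deriv_of_nonneg' (fun x _ => aux_antideriv hp x)
    (fun x hx => ?_) (((aux_tendsto_exp hp).neg).div_const p)
  have hx0 : (0:ℝ) < x := hX.trans hx
  positivity

lemma aux_base_integral (hp : p ≠ 0) {X : ℝ} (hX : 0 < X) :
    ∫ t in Ioi X, t ^ (p - 1) * Real.exp (-t ^ p) = Real.exp (-X ^ p) / p := by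
  have := integral_Ioi_of_hasDerivAt_of_nonneg' (g' := fun t : ℝ => t ^ (p - 1) * Real.exp (-t ^ p))
    (fun x _ => aux_antideriv hp x) (fun x (hx : X < x) => by
      have hx0 : (0:ℝ) < x := hX.trans hx
      positivity)
    (((aux_tendsto_exp hp).neg).div_const p)
  rw [this]; ring

lemma aux_zpow_anti {a b : ℝ} (ha : 0 < a) (hab : a ≤ b) {m : ℤ} (hm : m ≤ 0) :
    b ^ m ≤ a ^ m := by
  obtain ⟨n, rfl⟩ : ∃ n : ℕ, m = -n := ⟨(-m).toNat, by omega⟩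
  rw [zpow_neg, zpow_neg, zpow_natCast, zpow_natCast]
  exact inv_anti₀ (pow_pos ha n) (pow_le_pow_left₀ ha.le hab n)

lemma aux_integrable (hp : p ≠ 0) {X : ℝ} (hX : 0 < X) {z : ℤ} (hz : z ≤ (p : ℤ) - 1) :
    IntegrableOn (fun t : ℝ => t ^ z * Real.exp (-t ^ p)) (Ioi X) := by
  have hmeas : AEStronglyMeasurable (fun t : ℝ => t ^ z * Real.exp (-t ^ p))
      (volume.restrict (Ioi X)) := by
    apply ContinuousOn.aestronglyMeasurable _ measurableSet_Ioi
    apply ContinuousOn.mul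
    · intro x hx
      exact (continuousAt_zpow₀ _ _ (Or.inl (ne_of_gt (hX.trans hx)))).continuousWithinAt
    · fun_prop
  refine Integrable.mono' ((aux_base_integrable hp hX).const_mul (X ^ (z - (p - 1) : ℤ)))
    hmeas ?_
  filter_upwards [ae_restrict_mem measurableSet_Ioi] with t ht
  have ht0 : (0:ℝ) < t := hX.trans ht
  have h1 : t ^ z = t ^ (z - ((p:ℤ) - 1)) * t ^ ((p:ℤ) - 1) := by
    rw [← zpow_add₀ ht0.ne']; ring_nf
  rw [Real.norm_eq_abs, abs_of_nonneg (by positivity)]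
  rw [h1]
  have h2 : t ^ (z - ((p:ℤ) - 1)) ≤ X ^ (z - ((p:ℤ) - 1)) :=
    aux_zpow_anti hX ht.le (by omega)
  have h3 : t ^ ((p:ℤ) - 1) = t ^ (p - 1) := by
    rw [← zpow_natCast]
    congr 1
    omega
  rw [h3, mul_assoc]
  apply mul_le_mul_of_nonneg_right h2
  positivity

end Aux

section Main
variable {p l : ℕ}

lemma aux_ibp (hp : 2 ≤ p) (hl : l ≤ p - 2) {X : ℝ} (hX : 0 < X) :
    ∫ t in Ioi X, t ^ l * Real.exp (-t ^ p)
      = X ^ ((l : ℤ) + 1 - p) * Real.exp (-X ^ p) / p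
        - ((p : ℝ) - l - 1) / p * ∫ t in Ioi X, t ^ ((l : ℤ) - p) * Real.exp (-t ^ p) := by
  have hp0 : p ≠ 0 := by omega
  have hp' : (p : ℝ) ≠ 0 := Nat.cast_ne_zero.mpr hp0
  set m : ℤ := (l : ℤ) + 1 - p with hm
  have hm0 : m < 0 := by omega
  set c : ℝ := ((p : ℝ) - l - 1) / p with hc
  have hc0 : 0 ≤ c := by
    apply div_nonneg _ (by positivity)
    have : (l : ℝ) ≤ (p : ℝ) - 2 := by
      have : (l:ℝ) ≤ ((p-2 : ℕ) : ℝ) := Nat.cast_le.mpr hl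
      rwa [Nat.cast_sub hp] at this
    linarith
  -- derivative of G
  have hG : ∀ x ∈ Ici X, HasDerivAt (fun t : ℝ => t ^ m * (-Real.exp (-t ^ p) / p))
      (x ^ l * Real.exp (-x ^ p) + c * (x ^ ((l : ℤ) - p) * Real.exp (-x ^ p))) x := by
    intro x hx
    have hx0 : (0:ℝ) < x := lt_of_lt_of_le hX hx
    have h1 : HasDerivAt (fun t : ℝ => (t : ℝ) ^ m) ((m : ℝ) * x ^ (m - 1)) x :=
      hasDerivAt_zpow m x (Or.inl hx0.ne')
    have h2 := h1.mul ((aux_antideriv hp0 x).congr_deriv rfl)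
    refine h2.congr_deriv ?_
    have e1 : x ^ m * (x ^ (p-1) * Real.exp (-x ^ p)) = x ^ l * Real.exp (-x ^ p) := by
      rw [← zpow_natCast x (p-1), ← zpow_natCast x l, ← mul_assoc, ← zpow_add₀ hx0.ne']
      have : m + ((p-1:ℕ):ℤ) = (l:ℤ) := by omega
      rw [this]
    have e2 : (m : ℝ) * x ^ (m - 1) * (-Real.exp (-x ^ p) / p)
        = c * (x ^ ((l : ℤ) - p) * Real.exp (-x ^ p)) := by
      have : (m : ℝ) = (l : ℝ) + 1 - p := by push_cast [hm]; ring
      have hmm : m - 1 = (l : ℤ) - p := by omega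
      rw [this, hmm, hc]
      field_simp
      ring
    rw [← e1, ← e2]
    ring
  have hGtop : Tendsto (fun t : ℝ => t ^ m * (-Real.exp (-t ^ p) / p)) atTop (nhds 0) := by
    simpa using (tendsto_zpow_atTop_zero hm0).mul (((aux_tendsto_exp hp0).neg).div_const (p:ℝ))
  have hval := integral_Ioi_of_hasDerivAt_of_nonneg'
    (g' := fun x : ℝ => x ^ l * Real.exp (-x ^ p) + c * (x ^ ((l : ℤ) - p) * Real.exp (-x ^ p)))
    hG (fun x (hx : X < x) => by
      have hx0 : (0:ℝ) < x := hX.trans hx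
      positivity) hGtop
  have hI1 : IntegrableOn (fun t : ℝ => t ^ l * Real.exp (-t ^ p)) (Ioi X) := by
    have := aux_integrable hp0 hX (z := (l : ℤ)) (by omega)
    simpa [zpow_natCast] using this
  have hI2 : IntegrableOn (fun t : ℝ => t ^ ((l:ℤ) - p) * Real.exp (-t ^ p)) (Ioi X) :=
    aux_integrable hp0 hX (by omega)
  rw [integral_add hI1 (hI2.const_mul c), MeasureTheory.integral_const_mul] at hval
  have : X ^ m * (-Real.exp (-X ^ p) / ↑p) = -(X ^ m * Real.exp (-X ^ p) / p) := by ring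
  rw [this] at hval
  linarith [hval]

end Main


/-- For `p ≥ 2` and `0 ≤ l ≤ p-2`, the function
`Y(X) = e^{X^p} ∫_X^∞ t^l e^{-t^p} dt` satisfies `Y' = p X^{p-1} Y - X^l`
on `(0,∞)`, and `|Y(X) - X^{l+1-p}/p| ≤ ((p-l-1)/p²)·X^{l+1-2p}` for `X > 0`. -/
theorem rapid_special_function_estimate (p : ℕ) (hp : 2 ≤ p) (l : ℕ) (hl : l ≤ p - 2) :
    (∀ X : ℝ, 0 < X →
      HasDerivAt (fun X : ℝ => Real.exp (X ^ p) * ∫ t in Set.Ioi X, t ^ l * Real.exp (-t ^ p))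
        ((p : ℝ) * X ^ (p - 1) *
            (Real.exp (X ^ p) * ∫ t in Set.Ioi X, t ^ l * Real.exp (-t ^ p)) - X ^ l) X) ∧
    ∀ X : ℝ, 0 < X →
      |Real.exp (X ^ p) * (∫ t in Set.Ioi X, t ^ l * Real.exp (-t ^ p))
          - X ^ ((l : ℤ) + 1 - p) / p| ≤
        ((p : ℝ) - l - 1) / p ^ 2 * X ^ ((l : ℤ) + 1 - 2 * p) := by
  have hp0 : p ≠ 0 := by omega
  have hp' : (p : ℝ) ≠ 0 := Nat.cast_ne_zero.mpr hp0
  set f : ℝ → ℝ := fun t => t ^ l * Real.exp (-t ^ p) with hf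
  have hfc : Continuous f := by fun_prop
  constructor
  · intro X hX
    set a : ℝ := X / 2 with ha
    have ha0 : 0 < a := by positivity
    have haX : a < X := by simp [ha]; linarith
    have hIa : IntegrableOn f (Ioi a) := by
      have := aux_integrable hp0 ha0 (z := (l : ℤ)) (by omega)
      simpa [zpow_natCast] using this
    have hFeq : ∀ x ∈ Ioi a, (∫ t in Ioi a, f t) - (∫ t in a..x, f t) = ∫ t in Ioi x, f t := by
      intro x hx
      rw [intervalIntegral.integral_of_le (le_of_lt hx),
        ← Ioc_union_Ioi_eq_Ioi (le_of_lt hx),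
        setIntegral_union Ioc_disjoint_Ioi_same measurableSet_Ioi
          (hIa.mono_set Ioc_subset_Ioi_self) (hIa.mono_set (Ioi_subset_Ioi hx.le))]
      ring
    have hD1 : HasDerivAt (fun x => ∫ t in a..x, f t) (f X) X :=
      intervalIntegral.integral_hasDerivAt_right (hfc.intervalIntegrable a X)
        (hfc.stronglyMeasurable.stronglyMeasurableAtFilter) hfc.continuousAt
    have hD2 : HasDerivAt (fun x => (∫ t in Ioi a, f t) - ∫ t in a..x, f t) (-(f X)) X :=
      hD1.const_sub _
    have hF : HasDerivAt (fun x => ∫ t in Ioi x, f t) (-(f X)) X := by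
      refine hD2.congr_of_eventuallyEq ?_
      filter_upwards [Ioi_mem_nhds haX] with x hx
      exact (hFeq x hx).symm
    have hE : HasDerivAt (fun x : ℝ => Real.exp (x ^ p))
        (Real.exp (X ^ p) * ((p : ℝ) * X ^ (p - 1))) X := (hasDerivAt_pow p X).exp
    have hee : Real.exp (X ^ p) * Real.exp (-X ^ p) = 1 := by
      rw [← Real.exp_add]; simp
    refine (hE.mul hF).congr_deriv ?_
    simp only [hf]
    linear_combination (-(X : ℝ) ^ l) * hee
  · intro X hX
    set m : ℤ := (l : ℤ) + 1 - p with hm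
    set q : ℤ := (l : ℤ) + 1 - 2 * p with hq
    set c : ℝ := ((p : ℝ) - l - 1) / p with hc
    have hc0 : 0 ≤ c := by
      apply div_nonneg _ (by positivity)
      have h2 : l + 2 ≤ p := by omega
      have : (l : ℝ) + 2 ≤ p := by exact_mod_cast h2
      linarith
    set I2 : ℝ := ∫ t in Ioi X, t ^ ((l : ℤ) - p) * Real.exp (-t ^ p) with hI2def
    have hibp := aux_ibp hp hl hX
    have hee : Real.exp (X ^ p) * Real.exp (-X ^ p) = 1 := by
      rw [← Real.exp_add]; simp
    have hI2 : IntegrableOn (fun t : ℝ => t ^ ((l:ℤ) - p) * Real.exp (-t ^ p)) (Ioi X) :=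
      aux_integrable hp0 hX (by omega)
    have hI2nonneg : 0 ≤ I2 := by
      apply setIntegral_nonneg measurableSet_Ioi
      intro t ht
      have ht0 : (0:ℝ) < t := hX.trans ht
      positivity
    have hI2le : I2 ≤ X ^ q * (Real.exp (-X ^ p) / p) := by
      have hmono : I2 ≤ ∫ t in Ioi X, X ^ q * (t ^ (p - 1) * Real.exp (-t ^ p)) := by
        apply setIntegral_mono_on hI2 ((aux_base_integrable hp0 hX).const_mul _)
          measurableSet_Ioi
        intro t ht
        have ht0 : (0:ℝ) < t := hX.trans ht
        have h1 : t ^ ((l:ℤ) - p) = t ^ q * t ^ (p - 1) := by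
          rw [← zpow_natCast t (p - 1), ← zpow_add₀ ht0.ne']
          congr 1
          omega
        rw [h1]
        have h2 : t ^ q ≤ X ^ q := aux_zpow_anti hX ht.le (by omega)
        have : (0:ℝ) ≤ t ^ (p - 1) * Real.exp (-t ^ p) := by positivity
        calc t ^ q * t ^ (p-1) * Real.exp (-t ^ p)
            = t ^ q * (t ^ (p-1) * Real.exp (-t ^ p)) := by ring
          _ ≤ X ^ q * (t ^ (p-1) * Real.exp (-t ^ p)) :=
              mul_le_mul_of_nonneg_right h2 this
      rwa [MeasureTheory.integral_const_mul, aux_base_integral hp0 hX] at hmono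
    have key : Real.exp (X ^ p) * (∫ t in Ioi X, t ^ l * Real.exp (-t ^ p))
        - X ^ m / p = -(c * (Real.exp (X ^ p) * I2)) := by
      rw [hibp]
      linear_combination (X ^ m / (p:ℝ)) * hee
    simp only [hf]
    rw [key, abs_neg,
      abs_of_nonneg (by positivity : (0:ℝ) ≤ c * (Real.exp (X ^ p) * I2))]
    calc c * (Real.exp (X ^ p) * I2)
        ≤ c * (Real.exp (X ^ p) * (X ^ q * (Real.exp (-X ^ p) / p))) := by
          apply mul_le_mul_of_nonneg_left _ hc0
          exact mul_le_mul_of_nonneg_left hI2le (Real.exp_pos _).le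
      _ = ((p : ℝ) - l - 1) / p ^ 2 * X ^ q := by
          rw [hc]
          linear_combination (((p:ℝ) - l - 1) * X ^ q / p ^ 2) * hee
end

section
/- Let p ≥ 2 be an even integer and k : (-∞, 0] → ℂ continuous and bounded. Then Y(X) = e^{X^p} ∫_{-∞}^X e^{-t^p} k(t) dt is well defined, solves Y'(X) = p·X^{p−1}·Y(X) + k(X) on (-∞, 0], is the unique solution of this equation bounded on (-∞, 0], and satisfies sup_{X ≤ 0} |Y(X)| ≤ Γ(1 + 1/p)·sup|k|. -/
open MeasureTheory

namespace RapidAux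
open Set

lemma gamma_int {p : ℕ} (hp : 1 ≤ p) :
    ∫ s in Ioi (0:ℝ), Real.exp (-s ^ p) = Real.Gamma (1 + 1 / p) := by
  have hp' : (0:ℝ) < p := by exact_mod_cast hp
  rw [add_comm, ← integral_exp_neg_rpow hp']
  refine setIntegral_congr_fun measurableSet_Ioi fun x hx => ?_
  rw [Real.rpow_natCast]

lemma int_Ioi {p : ℕ} (hp : 1 ≤ p) :
    IntegrableOn (fun s : ℝ => Real.exp (-s ^ p)) (Ioi 0) := by
  have h := integrableOn_rpow_mul_exp_neg_rpow (p := (p:ℝ)) (s := 0) (by norm_num)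
    (by exact_mod_cast hp)
  refine h.congr_fun (fun x hx => ?_) measurableSet_Ioi
  simp only [Real.rpow_zero, one_mul, Real.rpow_natCast]

lemma mp_sub (X : ℝ) : MeasurePreserving (fun t : ℝ => X - t) volume volume := by
  simpa [sub_eq_add_neg, Function.comp_def] using
    (measurePreserving_add_left (volume : Measure ℝ) X).comp (Measure.measurePreserving_neg _)

lemma emb_sub (X : ℝ) : MeasurableEmbedding (fun t : ℝ => X - t) := by
  have h : MeasurableEmbedding (fun t : ℝ => X + -t) :=
    ((Homeomorph.neg ℝ).trans (Homeomorph.addLeft X)).isClosedEmbedding.measurableEmbedding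
  simpa [sub_eq_add_neg] using h

lemma preimage_sub (X : ℝ) : (fun t : ℝ => X - t) ⁻¹' (Ioi 0) = Iio X := by
  ext t; simp [sub_pos]

lemma integral_sub_comp (g : ℝ → ℝ) (X : ℝ) :
    ∫ t in Iio X, g (X - t) = ∫ s in Ioi (0:ℝ), g s := by
  have h := (emb_sub X).setIntegral_map (μ := volume) g (Ioi 0)
  rw [(mp_sub X).map_eq, preimage_sub] at h
  exact h.symm

lemma integrableOn_sub_comp {g : ℝ → ℝ} (hg : IntegrableOn g (Ioi 0)) (X : ℝ) :
    IntegrableOn (fun t => g (X - t)) (Iio X) := by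
  have h := (mp_sub X).integrableOn_comp_preimage (emb_sub X) (f := g) (s := Ioi 0)
  rw [preimage_sub] at h
  exact h.mpr hg

lemma key_ineq {p : ℕ} (hp : 1 ≤ p) (hpe : Even p) {t X : ℝ} (ht : t ≤ X) (hX : X ≤ 0) :
    Real.exp (X ^ p) * Real.exp (-t ^ p) ≤ Real.exp (-(X - t) ^ p) := by
  rw [← Real.exp_add, Real.exp_le_exp]
  have h := pow_add_pow_le (x := X - t) (y := -X) (n := p) (by linarith) (by linarith) (by omega)
  rw [show X - t + -X = -t by ring, hpe.neg_pow t, hpe.neg_pow X] at h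
  linarith

lemma int_exp_Iio {p : ℕ} (hp : 1 ≤ p) (hpe : Even p) {X : ℝ} (hX : X ≤ 0) :
    IntegrableOn (fun t : ℝ => Real.exp (-t ^ p)) (Iio X) := by
  have h0 : IntegrableOn (fun t : ℝ => Real.exp (-(0 - t) ^ p)) (Iio (0:ℝ)) :=
    integrableOn_sub_comp (int_Ioi hp) 0
  have h1 : IntegrableOn (fun t : ℝ => Real.exp (-t ^ p)) (Iio (0:ℝ)) := by
    refine h0.congr_fun (fun x hx => ?_) measurableSet_Iio
    simp only [zero_sub, hpe.neg_pow]
  exact h1.mono_set (Iio_subset_Iio hX)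



variable {p : ℕ} {k : ℝ → ℂ} {M : ℝ}

lemma cont_f (hk : ContinuousOn k (Set.Iic 0)) :
    ContinuousOn (fun t => (Real.exp (-t ^ p) : ℂ) * k t) (Iic 0) := by
  exact (Continuous.continuousOn (by fun_prop)).mul hk

lemma int_f (hp : 1 ≤ p) (hpe : Even p) (hk : ContinuousOn k (Set.Iic 0))
    (hM : ∀ X ≤ (0 : ℝ), ‖k X‖ ≤ M) {X : ℝ} (hX : X ≤ 0) :
    IntegrableOn (fun t => (Real.exp (-t ^ p) : ℂ) * k t) (Iio X) := by
  refine Integrable.mono' ((int_exp_Iio hp hpe hX).mul_const M) ?_ ?_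
  · exact ((cont_f hk).mono (Iio_subset_Iic hX)).aestronglyMeasurable measurableSet_Iio
  · filter_upwards [ae_restrict_mem measurableSet_Iio] with t ht
    have htle : t ≤ 0 := le_trans (le_of_lt ht) hX
    rw [norm_mul, Complex.norm_real, Real.norm_eq_abs, abs_of_nonneg (Real.exp_pos _).le]
    exact mul_le_mul_of_nonneg_left (hM t htle) (Real.exp_pos _).le

lemma bound_f (hp : 1 ≤ p) (hpe : Even p) (hk : ContinuousOn k (Set.Iic 0))
    (hM : ∀ X ≤ (0 : ℝ), ‖k X‖ ≤ M) {X : ℝ} (hX : X ≤ 0) :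
    ‖(Real.exp (X ^ p) : ℂ) * ∫ t in Iio X, (Real.exp (-t ^ p) : ℂ) * k t‖ ≤
      Real.Gamma (1 + 1 / p) * M := by
  have hM0 : 0 ≤ M := le_trans (norm_nonneg _) (hM 0 le_rfl)
  have hint := int_f hp hpe hk hM hX
  have hexp := int_exp_Iio hp hpe hX
  have hsub : IntegrableOn (fun t : ℝ => Real.exp (-(X - t) ^ p)) (Iio X) :=
    integrableOn_sub_comp (int_Ioi hp) X
  have step1 : ‖(Real.exp (X ^ p) : ℂ) * ∫ t in Iio X, (Real.exp (-t ^ p) : ℂ) * k t‖ ≤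
      Real.exp (X ^ p) * ∫ t in Iio X, Real.exp (-t ^ p) * M := by
    rw [norm_mul, Complex.norm_real, Real.norm_eq_abs, abs_of_nonneg (Real.exp_pos _).le]
    refine mul_le_mul_of_nonneg_left ?_ (Real.exp_pos _).le
    refine le_trans (norm_integral_le_integral_norm _) ?_
    refine setIntegral_mono_on hint.norm (hexp.mul_const M) measurableSet_Iio fun t ht => ?_
    rw [norm_mul, Complex.norm_real, Real.norm_eq_abs, abs_of_nonneg (Real.exp_pos _).le]
    exact mul_le_mul_of_nonneg_left (hM t (le_trans (le_of_lt ht) hX)) (Real.exp_pos _).le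
  have step2 : Real.exp (X ^ p) * ∫ t in Iio X, Real.exp (-t ^ p) * M ≤
      ∫ t in Iio X, Real.exp (-(X - t) ^ p) * M := by
    rw [← integral_const_mul]
    refine setIntegral_mono_on (((hexp.mul_const M).const_mul _)) (hsub.mul_const M)
      measurableSet_Iio fun t ht => ?_
    rw [← mul_assoc]
    exact mul_le_mul_of_nonneg_right (key_ineq hp hpe (le_of_lt ht) hX) hM0
  have step3 : (∫ t in Iio X, Real.exp (-(X - t) ^ p) * M) = Real.Gamma (1 + 1 / p) * M := by
    rw [integral_sub_comp (fun s => Real.exp (-s ^ p) * M) X, integral_mul_const, gamma_int hp]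
  linarith



lemma deriv_F (hp : 1 ≤ p) (hpe : Even p) (hk : ContinuousOn k (Set.Iic 0))
    (hM : ∀ X ≤ (0 : ℝ), ‖k X‖ ≤ M) {X : ℝ} (hX : X ≤ 0) :
    HasDerivWithinAt (fun u : ℝ => ∫ t in Iio u, (Real.exp (-t ^ p) : ℂ) * k t)
      ((Real.exp (-X ^ p) : ℂ) * k X) (Iic 0) X := by
  set f : ℝ → ℂ := fun t => (Real.exp (-t ^ p) : ℂ) * k t with hf
  have hfc : ContinuousOn f (Iic 0) := cont_f hk
  have hintIic : ∀ Y : ℝ, Y ≤ 0 → IntegrableOn f (Iic Y) := fun Y hY =>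
    (integrableOn_Iic_iff_integrableOn_Iio).mpr (int_f hp hpe hk hM hY)
  have key : ∀ Y ∈ Iic (0:ℝ),
      (∫ t in Iio Y, f t) = (∫ t in Iio (0:ℝ), f t) + ∫ t in (0:ℝ)..Y, f t := by
    intro Y hY
    have h := intervalIntegral.integral_Iic_sub_Iic (μ := volume) (f := f) (hintIic 0 le_rfl) (hintIic Y hY)
    rw [integral_Iic_eq_integral_Iio, integral_Iic_eq_integral_Iio] at h
    linear_combination h
  have hii : IntervalIntegrable f volume 0 X := by
    refine IntegrableOn.intervalIntegrable ?_
    refine (hintIic 0 le_rfl).mono_set ?_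
    rw [uIcc_of_ge hX]
    exact (Icc_subset_Iic_self)
  have hd : HasDerivWithinAt (fun u : ℝ => ∫ t in (0:ℝ)..u, f t) (f X) (Iic 0) X := by
    rcases lt_or_eq_of_le hX with hX' | hX'
    · have hco : ContinuousOn f (Iio (0:ℝ)) := hfc.mono Iio_subset_Iic_self
      have hca : ContinuousAt f X :=
        hco.continuousAt (Iio_mem_nhds hX')
      exact (intervalIntegral.integral_hasDerivAt_right hii
        (hco.stronglyMeasurableAtFilter isOpen_Iio X hX') hca).hasDerivWithinAt
    · subst hX'
      exact intervalIntegral.integral_hasDerivWithinAt_right (s := Iic (0:ℝ)) (t := Iic (0:ℝ)) hii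
        (hfc.stronglyMeasurableAtFilter_nhdsWithin measurableSet_Iic 0)
        (hfc.continuousWithinAt (by simp))
  exact (hd.const_add (∫ t in Iio (0:ℝ), f t)).congr key (key X hX)



variable {p : ℕ} {k : ℝ → ℂ} {M : ℝ}

lemma deriv_Y (hp : 1 ≤ p) (hpe : Even p) (hk : ContinuousOn k (Set.Iic 0))
    (hM : ∀ X ≤ (0 : ℝ), ‖k X‖ ≤ M) {X : ℝ} (hX : X ≤ 0) :
    HasDerivWithinAt
      (fun X : ℝ => (Real.exp (X ^ p) : ℂ) *
        ∫ t in Set.Iio X, (Real.exp (-t ^ p) : ℂ) * k t)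
      ((p : ℂ) * (X : ℂ) ^ (p - 1) *
          ((Real.exp (X ^ p) : ℂ) * ∫ t in Set.Iio X, (Real.exp (-t ^ p) : ℂ) * k t)
        + k X) (Set.Iic 0) X := by
  have hg : HasDerivWithinAt (fun x : ℝ => (Real.exp (x ^ p) : ℂ))
      ((Real.exp (X ^ p) * ((p : ℝ) * X ^ (p - 1)) : ℝ) : ℂ) (Iic 0) X :=
    ((hasDerivAt_pow p X).exp.ofReal_comp).hasDerivWithinAt
  have hmul := hg.mul (deriv_F hp hpe hk hM hX)
  have hcancel : (Real.exp (X ^ p) : ℂ) * (Real.exp (-X ^ p) : ℂ) = 1 := by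
    rw [← Complex.ofReal_mul, ← Real.exp_add, add_neg_cancel, Real.exp_zero, Complex.ofReal_one]
  refine hmul.congr_deriv ?_
  push_cast at hcancel ⊢
  linear_combination (k X) * hcancel

lemma unique_Z (hp : 1 ≤ p) (hpe : Even p) (hk : ContinuousOn k (Set.Iic 0))
    (hM : ∀ X ≤ (0 : ℝ), ‖k X‖ ≤ M) (Z : ℝ → ℂ)
    (hZ : ∀ X ≤ (0 : ℝ), HasDerivWithinAt Z
      ((p : ℂ) * (X : ℂ) ^ (p - 1) * Z X + k X) (Set.Iic 0) X)
    (B : ℝ) (hB : ∀ X ≤ (0 : ℝ), ‖Z X‖ ≤ B) :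
    ∀ X ≤ (0 : ℝ), Z X = (Real.exp (X ^ p) : ℂ) *
      ∫ t in Set.Iio X, (Real.exp (-t ^ p) : ℂ) * k t := by
  set Y : ℝ → ℂ := fun X => (Real.exp (X ^ p) : ℂ) *
      ∫ t in Set.Iio X, (Real.exp (-t ^ p) : ℂ) * k t with hYdef
  set G : ℝ → ℂ := fun X => (Real.exp (-X ^ p) : ℂ) * (Z X - Y X) with hGdef
  have hG0 : ∀ X ∈ Iic (0:ℝ), HasDerivWithinAt G 0 (Iic 0) X := by
    intro X hX
    have hgder : HasDerivWithinAt (fun x : ℝ => (Real.exp (-x ^ p) : ℂ))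
        ((Real.exp (-X ^ p) * -((p : ℝ) * X ^ (p - 1)) : ℝ) : ℂ) (Iic 0) X := by
      have h1 : HasDerivAt (fun x : ℝ => -x ^ p) (-((p : ℝ) * X ^ (p - 1))) X :=
        (hasDerivAt_pow p X).neg
      exact (h1.exp.ofReal_comp).hasDerivWithinAt
    have hW := (hZ X hX).sub (deriv_Y hp hpe hk hM hX)
    have hprod := hgder.mul hW
    refine hprod.congr_deriv ?_
    push_cast [Pi.sub_apply]
    ring
  have hGconst : ∀ X ≤ (0:ℝ), G X = G 0 := by
    intro X hX
    have := Convex.norm_image_sub_le_of_norm_hasDerivWithin_le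
      (f := G) (f' := fun _ => (0:ℂ)) (C := 0) hG0 (fun x _ => by simp)
      (convex_Iic (0:ℝ)) (self_mem_Iic (α := ℝ)) hX
    rw [zero_mul] at this
    exact sub_eq_zero.mp (norm_le_zero_iff.mp this)
  have hbY : ∀ X ≤ (0:ℝ), ‖Y X‖ ≤ Real.Gamma (1 + 1 / p) * M := fun X hX =>
    bound_f hp hpe hk hM hX
  have hcle : ∀ n : ℕ, ‖G 0‖ ≤ (B + Real.Gamma (1 + 1 / p) * M) * Real.exp (-((n:ℝ)) ^ p) := by
    intro n
    have hXn : (-(n:ℝ)) ≤ 0 := neg_nonpos.mpr (Nat.cast_nonneg n)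
    have hnorm : ‖Z (-(n:ℝ)) - Y (-(n:ℝ))‖ ≤ B + Real.Gamma (1 + 1 / p) * M :=
      le_trans (norm_sub_le _ _) (add_le_add (hB _ hXn) (hbY _ hXn))
    calc ‖G 0‖ = ‖G (-(n:ℝ))‖ := by rw [hGconst _ hXn]
      _ = Real.exp (-(-(n:ℝ)) ^ p) * ‖Z (-(n:ℝ)) - Y (-(n:ℝ))‖ := by
          rw [hGdef]
          rw [norm_mul, Complex.norm_real, Real.norm_eq_abs,
            abs_of_nonneg (Real.exp_pos _).le]
      _ ≤ Real.exp (-(-(n:ℝ)) ^ p) * (B + Real.Gamma (1 + 1 / p) * M) :=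
          mul_le_mul_of_nonneg_left hnorm (Real.exp_pos _).le
      _ = (B + Real.Gamma (1 + 1 / p) * M) * Real.exp (-((n:ℝ)) ^ p) := by
          rw [hpe.neg_pow, mul_comm]
  have hlim : Filter.Tendsto
      (fun n : ℕ => (B + Real.Gamma (1 + 1 / p) * M) * Real.exp (-((n:ℝ)) ^ p))
      Filter.atTop (nhds 0) := by
    have h1 : Filter.Tendsto (fun n : ℕ => ((n:ℝ)) ^ p) Filter.atTop Filter.atTop :=
      (Filter.tendsto_pow_atTop (by omega : p ≠ 0)).comp tendsto_natCast_atTop_atTop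
    have h2 := Real.tendsto_exp_atBot.comp (Filter.tendsto_neg_atTop_atBot.comp h1)
    simpa using h2.const_mul (B + Real.Gamma (1 + 1 / p) * M)
  have hcz : G 0 = 0 :=
    norm_le_zero_iff.mp (ge_of_tendsto' hlim hcle)
  intro X hX
  have h1 : G X = 0 := by rw [hGconst X hX, hcz]
  have h2 : ((Real.exp (-X ^ p) : ℝ) : ℂ) ≠ 0 :=
    Complex.ofReal_ne_zero.mpr (Real.exp_pos _).ne'
  rcases mul_eq_zero.mp h1 with h | h
  · exact absurd h h2
  · exact sub_eq_zero.mp h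


end RapidAux

/-- For `p ≥ 2` even and `k` continuous and bounded on `(-∞,0]`,
`Y(X) = e^{X^p} ∫_{-∞}^X e^{-t^p} k(t) dt` is well defined, solves
`Y' = p X^{p-1} Y + k(X)` on `(-∞,0]`, is the unique bounded solution there,
and satisfies `sup_{X≤0} ‖Y(X)‖ ≤ Γ(1 + 1/p)·sup‖k‖`. -/
theorem rapid_part_bounded_solution (p : ℕ) (hp2 : 2 ≤ p) (hpeven : Even p)
    (k : ℝ → ℂ) (hk : ContinuousOn k (Set.Iic 0))
    (M : ℝ) (hM : ∀ X ≤ (0 : ℝ), ‖k X‖ ≤ M) :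
    (∀ X ≤ (0 : ℝ),
      IntegrableOn (fun t => (Real.exp (-t ^ p) : ℂ) * k t) (Set.Iio X)) ∧
    (∀ X ≤ (0 : ℝ), HasDerivWithinAt
        (fun X : ℝ => (Real.exp (X ^ p) : ℂ) *
          ∫ t in Set.Iio X, (Real.exp (-t ^ p) : ℂ) * k t)
        ((p : ℂ) * (X : ℂ) ^ (p - 1) *
            ((Real.exp (X ^ p) : ℂ) * ∫ t in Set.Iio X, (Real.exp (-t ^ p) : ℂ) * k t)
          + k X) (Set.Iic 0) X) ∧
    (∀ Z : ℝ → ℂ,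
      (∀ X ≤ (0 : ℝ), HasDerivWithinAt Z
          ((p : ℂ) * (X : ℂ) ^ (p - 1) * Z X + k X) (Set.Iic 0) X) →
      (∃ B, ∀ X ≤ (0 : ℝ), ‖Z X‖ ≤ B) →
      ∀ X ≤ (0 : ℝ), Z X = (Real.exp (X ^ p) : ℂ) *
        ∫ t in Set.Iio X, (Real.exp (-t ^ p) : ℂ) * k t) ∧
    (∀ X ≤ (0 : ℝ),
      ‖(Real.exp (X ^ p) : ℂ) * ∫ t in Set.Iio X, (Real.exp (-t ^ p) : ℂ) * k t‖ ≤
        Real.Gamma (1 + 1 / p) * M) := by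
  have hp : 1 ≤ p := by omega
  refine ⟨fun X hX => RapidAux.int_f hp hpeven hk hM hX,
    fun X hX => RapidAux.deriv_Y hp hpeven hk hM hX,
    fun Z hZ hB => ?_,
    fun X hX => RapidAux.bound_f hp hpeven hk hM hX⟩
  obtain ⟨B, hB⟩ := hB
  exact RapidAux.unique_Z hp hpeven hk hM Z hZ B hB
end
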